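/- arXiv:2311.01959 — 6 statements merged into one kernel-verified Lean document; each statement's English description precedes it below -/
import Mathlib

section
/- For every linear subspace W ⊆ ℝ^n and every nonzero z ∈ W, there exist h ≤ n and elementary vectors g^1, …, g^h of W, each conforming to z, such that z = Σ_{k=1}^h g^k and, for each i ∈ {1, …, h−1}, supp(g^i) \ (supp(g^{i+1}) ∪ ⋯ ∪ supp(g^h)) ≠ ∅ (i.e., z admits a conformal circuit decomposition). -/
open BigOperators Finset

noncomputable section

open Classical

/-- A nonzero `g ∈ W` is an elementary vector of `W` if no nonzero `h ∈ W`
has strictly smaller support. -/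
def IsElementaryVec {ι : Type*} (W : Submodule ℝ (ι → ℝ)) (g : ι → ℝ) : Prop :=
  g ∈ W ∧ g ≠ 0 ∧ ∀ h : ι → ℝ, h ∈ W → h ≠ 0 → ¬ ({i | h i ≠ 0} ⊂ {i | g i ≠ 0})

/-- The circuit imbalance measure `κ(W)`: the maximum of `|g j / g i|` over elementary
vectors `g` of `W` and `i, j ∈ supp(g)`, with `κ(W) := 1` for the trivial subspaces. -/
noncomputable def kappaSub {ι : Type*} (W : Submodule ℝ (ι → ℝ)) : ℝ :=
  if W = ⊥ ∨ W = ⊤ then 1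
  else sSup {t : ℝ | ∃ g : ι → ℝ, IsElementaryVec W g ∧
    ∃ i j : ι, g i ≠ 0 ∧ g j ≠ 0 ∧ t = |g j / g i|}

/-- `y` conforms to `x` if `x i * y i > 0` whenever `y i ≠ 0`. -/
def Conforms {ι : Type*} (x y : ι → ℝ) : Prop :=
  ∀ i, y i ≠ 0 → x i * y i > 0

/-- The extended subspace `X_A := ker (A | −I_m) ⊆ ℝ^{n+m}`. -/
noncomputable def XA {m n : ℕ} (A : Matrix (Fin m) (Fin n) ℝ) :
    Submodule ℝ (Fin n ⊕ Fin m → ℝ) :=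
  LinearMap.ker (Matrix.fromCols A (-1)).mulVecLin


lemma conforms_trans {n : ℕ} {z w g : Fin n → ℝ} (h1 : Conforms z w) (h2 : Conforms w g) :
    Conforms z g := by
  intro i hg
  have hw := h2 i hg
  have hwne : w i ≠ 0 := by intro h; rw [h] at hw; simp at hw
  have hz := h1 i hwne
  nlinarith [mul_pos hz hw, sq_nonneg (w i), mul_self_pos.mpr hwne]

lemma step_lemma {n : ℕ} (z v : Fin n → ℝ) (hpos : ∃ i, 0 < z i * v i)
    (hsupp : ∀ i, v i ≠ 0 → z i ≠ 0) :
    ∃ α : ℝ, 0 < α ∧ ∃ i₀, v i₀ ≠ 0 ∧ (z - α • v) i₀ = 0 ∧ Conforms z (z - α • v) := by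
  classical
  set S : Finset (Fin n) := univ.filter (fun i => 0 < z i * v i) with hS
  have hSne : S.Nonempty := by
    obtain ⟨i, hi⟩ := hpos
    exact ⟨i, by simp [hS, hi]⟩
  obtain ⟨i₀, hi₀S, hmin⟩ := S.exists_min_image (fun i => z i / v i) hSne
  have hi₀ : 0 < z i₀ * v i₀ := by simpa [hS] using hi₀S
  have hvi₀ : v i₀ ≠ 0 := by
    intro h; rw [h] at hi₀; simp at hi₀
  set α : ℝ := z i₀ / v i₀ with hα
  have hαpos : 0 < α := by
    rcases mul_pos_iff.mp hi₀ with ⟨h1, h2⟩ | ⟨h1, h2⟩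
    · exact div_pos h1 h2
    · exact div_pos_of_neg_of_neg h1 h2
  refine ⟨α, hαpos, i₀, hvi₀, ?_, ?_⟩
  · simp only [Pi.sub_apply, Pi.smul_apply, smul_eq_mul, hα]
    field_simp
    ring
  · intro i hne
    simp only [Pi.sub_apply, Pi.smul_apply, smul_eq_mul] at hne ⊢
    by_cases hv : v i = 0
    · rw [hv] at hne ⊢
      simp only [mul_zero, sub_zero] at hne ⊢
      exact mul_self_pos.mpr hne
    · have hzi : z i ≠ 0 := hsupp i hv
      rcases lt_trichotomy (z i * v i) 0 with hlt | heq | hgt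
      · have h2 : 0 < z i * z i := mul_self_pos.mpr hzi
        nlinarith
      · exact absurd heq (mul_ne_zero hzi hv)
      · have hiS : i ∈ S := by simp [hS, hgt]
        have hle : α ≤ z i / v i := hmin i hiS
        have key : α * (z i * v i) ≤ (z i / v i) * (z i * v i) :=
          mul_le_mul_of_nonneg_right hle (le_of_lt hgt)
        have heq2 : (z i / v i) * (z i * v i) = z i * z i := by
          field_simp
        have h0 : 0 ≤ z i * (z i - α * v i) := by nlinarith
        have hne2 : z i * (z i - α * v i) ≠ 0 := mul_ne_zero hzi hne
        exact lt_of_le_of_ne h0 (Ne.symm hne2)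

lemma exists_elem_conform {n : ℕ} (W : Submodule ℝ (Fin n → ℝ)) :
    ∀ N (z : Fin n → ℝ), z ∈ W → z ≠ 0 →
      (univ.filter (fun i => z i ≠ 0)).card ≤ N →
      ∃ g, IsElementaryVec W g ∧ Conforms z g := by
  intro N
  induction N with
  | zero =>
    intro z hzW hz hcard
    obtain ⟨i, hi⟩ := Function.ne_iff.mp hz
    simp only [Pi.zero_apply] at hi
    have : i ∈ univ.filter (fun i => z i ≠ 0) := by simp [hi]
    have := Finset.card_pos.mpr ⟨i, this⟩
    omega
  | succ N ih =>
    intro z hzW hz hcard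
    by_cases helem : ∀ h : Fin n → ℝ, h ∈ W → h ≠ 0 → ¬ ({i | h i ≠ 0} ⊂ {i | z i ≠ 0})
    · exact ⟨z, ⟨hzW, hz, helem⟩, fun i hi => mul_self_pos.mpr hi⟩
    · push_neg at helem
      obtain ⟨v, hvW, hv0, hvsub⟩ := helem
      have hsub : {i | v i ≠ 0} ⊆ {i | z i ≠ 0} := hvsub.subset
      obtain ⟨i₁, hi₁z, hi₁v⟩ := Set.exists_of_ssubset hvsub
      simp only [Set.mem_setOf_eq] at hi₁z hi₁v
      push_neg at hi₁v
      have key : ∃ v' : Fin n → ℝ, v' ∈ W ∧ (∀ i, v' i ≠ 0 ↔ v i ≠ 0) ∧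
          ∃ i, 0 < z i * v' i := by
        by_cases hex : ∃ i, 0 < z i * v i
        · exact ⟨v, hvW, fun i => Iff.rfl, hex⟩
        · push_neg at hex
          obtain ⟨i, hvi⟩ := Function.ne_iff.mp hv0
          simp only [Pi.zero_apply] at hvi
          have hzi : z i ≠ 0 := hsub hvi
          have hlt : z i * v i < 0 := lt_of_le_of_ne (hex i) (mul_ne_zero hzi hvi)
          exact ⟨-v, neg_mem hvW, by simp, ⟨i, by simp; nlinarith⟩⟩
      obtain ⟨v', hv'W, hv'supp, hv'pos⟩ := key
      have hsupp' : ∀ i, v' i ≠ 0 → z i ≠ 0 := fun i hi => hsub ((hv'supp i).mp hi)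
      obtain ⟨α, hαpos, i₀, hvi₀, hwi₀, hconf⟩ := step_lemma z v' hv'pos hsupp'
      set w : Fin n → ℝ := z - α • v' with hw
      have hwW : w ∈ W := Submodule.sub_mem W hzW (Submodule.smul_mem W α hv'W)
      have hw0 : w ≠ 0 := by
        intro h
        have : w i₁ = 0 := by rw [h]; rfl
        have hv'i₁ : v' i₁ = 0 := by
          by_contra hc
          exact (hv'supp i₁).mp hc hi₁v
        simp only [hw, Pi.sub_apply, Pi.smul_apply, smul_eq_mul, hv'i₁, mul_zero,
          sub_zero] at this
        exact hi₁z this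
      have hzi₀ : z i₀ ≠ 0 := hsupp' i₀ hvi₀
      have hcard' : (univ.filter (fun i => w i ≠ 0)).card ≤ N := by
        have hsubfil : univ.filter (fun i => w i ≠ 0) ⊆
            (univ.filter (fun i => z i ≠ 0)).erase i₀ := by
          intro i hi
          simp only [mem_filter, mem_univ, true_and] at hi
          have hzine : z i ≠ 0 := by
            have := hconf i hi
            intro h; rw [h] at this; simp at this
          have hine : i ≠ i₀ := by
            intro h; rw [h] at hi; exact hi hwi₀
          simp [Finset.mem_erase, hine, hzine]
        have h1 := Finset.card_le_card hsubfil
        have h2 : i₀ ∈ univ.filter (fun i => z i ≠ 0) := by simp [hzi₀]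
        have h3 := Finset.card_erase_of_mem h2
        omega
      obtain ⟨g, hgel, hgconf⟩ := ih w hwW hw0 hcard'
      exact ⟨g, hgel, conforms_trans hconf hgconf⟩

lemma elem_smul {n : ℕ} (W : Submodule ℝ (Fin n → ℝ)) {g : Fin n → ℝ} {α : ℝ}
    (hα : α ≠ 0) (hg : IsElementaryVec W g) : IsElementaryVec W (α • g) := by
  obtain ⟨hgW, hg0, hgel⟩ := hg
  refine ⟨Submodule.smul_mem W α hgW, smul_ne_zero hα hg0, ?_⟩
  have hset : {i | (α • g) i ≠ 0} = {i | g i ≠ 0} := by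
    ext i; simp [Pi.smul_apply, smul_eq_mul, hα]
  rw [hset]
  exact hgel

lemma decomp_aux {n : ℕ} (W : Submodule ℝ (Fin n → ℝ)) :
    ∀ N (z : Fin n → ℝ), z ∈ W → z ≠ 0 →
      (univ.filter (fun i => z i ≠ 0)).card ≤ N →
      ∃ (h : ℕ) (g : Fin h → Fin n → ℝ), h ≤ N ∧
        (∀ k, IsElementaryVec W (g k)) ∧
        (∀ k, Conforms z (g k)) ∧
        z = ∑ k, g k ∧
        (∀ i : Fin h, (i : ℕ) < h - 1 →
          ∃ j : Fin n, g i j ≠ 0 ∧ ∀ k : Fin h, i < k → g k j = 0) := by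
  intro N
  induction N with
  | zero =>
    intro z hzW hz hcard
    obtain ⟨i, hi⟩ := Function.ne_iff.mp hz
    simp only [Pi.zero_apply] at hi
    have : i ∈ univ.filter (fun i => z i ≠ 0) := by simp [hi]
    have := Finset.card_pos.mpr ⟨i, this⟩
    omega
  | succ N ih =>
    intro z hzW hz hcard
    obtain ⟨g₀, hg₀el, hg₀conf⟩ :=
      exists_elem_conform W ((univ.filter (fun i => z i ≠ 0)).card) z hzW hz le_rfl
    have hg₀0 : g₀ ≠ 0 := hg₀el.2.1
    obtain ⟨i', hg₀i'⟩ := Function.ne_iff.mp hg₀0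
    simp only [Pi.zero_apply] at hg₀i'
    have hpos : ∃ i, 0 < z i * g₀ i := ⟨i', hg₀conf i' hg₀i'⟩
    have hsupp : ∀ i, g₀ i ≠ 0 → z i ≠ 0 := by
      intro i hi h0
      have := hg₀conf i hi
      rw [h0] at this; simp at this
    obtain ⟨α, hαpos, i₀, hgi₀, hwi₀, hconf⟩ := step_lemma z g₀ hpos hsupp
    set w : Fin n → ℝ := z - α • g₀ with hwdef
    have hwW : w ∈ W := Submodule.sub_mem W hzW (Submodule.smul_mem W α hg₀el.1)
    have hzi₀ : z i₀ ≠ 0 := hsupp i₀ hgi₀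
    have hel' : IsElementaryVec W (α • g₀) := elem_smul W (ne_of_gt hαpos) hg₀el
    have hconf' : Conforms z (α • g₀) := by
      intro i hi
      simp only [Pi.smul_apply, smul_eq_mul] at hi ⊢
      have hgne : g₀ i ≠ 0 := by
        intro h; rw [h] at hi; simp at hi
      have := hg₀conf i hgne
      nlinarith
    by_cases hw0 : w = 0
    · refine ⟨1, fun _ => α • g₀, by omega, fun _ => hel', fun _ => hconf', ?_, ?_⟩
      · rw [Fin.sum_univ_one]
        funext i
        have h0 := congrFun hw0 i
        simp only [hwdef, Pi.sub_apply, Pi.zero_apply, sub_eq_zero] at h0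
        exact h0
      · intro i hi
        simp at hi
    · have hcard' : (univ.filter (fun i => w i ≠ 0)).card ≤ N := by
        have hsubfil : univ.filter (fun i => w i ≠ 0) ⊆
            (univ.filter (fun i => z i ≠ 0)).erase i₀ := by
          intro i hi
          simp only [mem_filter, mem_univ, true_and] at hi
          have hzine : z i ≠ 0 := by
            have := hconf i hi
            intro h; rw [h] at this; simp at this
          have hine : i ≠ i₀ := by
            intro h; rw [h] at hi; exact hi hwi₀
          simp [Finset.mem_erase, hine, hzine]
        have h1 := Finset.card_le_card hsubfil
        have h2 : i₀ ∈ univ.filter (fun i => z i ≠ 0) := by simp [hzi₀]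
        have h3 := Finset.card_erase_of_mem h2
        omega
      obtain ⟨h', g', hh'N, hg'el, hg'conf, hg'sum, hg'supp⟩ := ih w hwW hw0 hcard'
      refine ⟨h' + 1, Fin.cons (α • g₀) g', by omega, ?_, ?_, ?_, ?_⟩
      · intro k
        induction k using Fin.cases with
        | zero => simpa using hel'
        | succ k => simpa using hg'el k
      · intro k
        induction k using Fin.cases with
        | zero => simpa using hconf'
        | succ k => simpa using conforms_trans hconf (hg'conf k)
      · rw [Fin.sum_cons, ← hg'sum]
        simp [hwdef]
      · intro i hi
        induction i using Fin.cases with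
        | zero =>
          refine ⟨i₀, ?_, ?_⟩
          · simp only [Fin.cons_zero, Pi.smul_apply, smul_eq_mul]
            exact mul_ne_zero (ne_of_gt hαpos) hgi₀
          · intro k hk
            induction k using Fin.cases with
            | zero => exact absurd hk (lt_irrefl _)
            | succ k =>
              simp only [Fin.cons_succ]
              by_contra hc
              have := hg'conf k i₀ hc
              rw [hwi₀] at this
              simp at this
        | succ i =>
          simp only [Fin.val_succ] at hi
          have hi' : (i : ℕ) < h' - 1 := by omega
          obtain ⟨j, hj1, hj2⟩ := hg'supp i hi'
          refine ⟨j, by simpa using hj1, ?_⟩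
          intro k hk
          induction k using Fin.cases with
          | zero => exact absurd hk (by simp [Fin.lt_def])
          | succ k =>
            have : i < k := by
              rw [Fin.lt_def] at hk ⊢
              simpa using hk
            simpa using hj2 k this

/-- Every nonzero `z` in a linear subspace `W ⊆ ℝ^n` admits a conformal
circuit decomposition `z = Σ_{k=1}^h g^k` with `h ≤ n`, each `g^k` an elementary vector
of `W` conforming to `z`, and for each `i < h − 1` the support of `g^i` is not covered
by the supports of the later vectors. -/
theorem conformal_circuit_decomposition {n : ℕ} (W : Submodule ℝ (Fin n → ℝ))
    (z : Fin n → ℝ) (hzW : z ∈ W) (hz : z ≠ 0) :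
    ∃ (h : ℕ) (g : Fin h → Fin n → ℝ), h ≤ n ∧
      (∀ k, IsElementaryVec W (g k)) ∧
      (∀ k, Conforms z (g k)) ∧
      z = ∑ k, g k ∧
      (∀ i : Fin h, (i : ℕ) < h - 1 →
        ∃ j : Fin n, g i j ≠ 0 ∧ ∀ k : Fin h, i < k → g k j = 0) := by
  obtain ⟨h, g, hhN, hel, hconf, hsum, hsuppcond⟩ :=
    decomp_aux W ((univ.filter (fun i => z i ≠ 0)).card) z hzW hz le_rfl
  refine ⟨h, g, ?_, hel, hconf, hsum, hsuppcond⟩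
  calc h ≤ (univ.filter (fun i => z i ≠ 0)).card := hhN
    _ ≤ (univ : Finset (Fin n)).card := Finset.card_filter_le _ _
    _ = n := by simp
end
end

section
/- Let A ∈ ℝ^{m×n} and let z ∈ ℝ^n be cycle-free with respect to A. Then ‖z‖_∞ ≤ κ(X_A)·‖Az‖₁ and ‖z‖₂ ≤ m·κ(X_A)·‖Az‖₂. -/
open BigOperators Finset

noncomputable section

open Classical

namespace CFP

variable {ι : Type*} [Fintype ι]

/-- The support of a vector as a `Finset`. -/
def suppF (x : ι → ℝ) : Finset ι := Finset.univ.filter (fun i => x i ≠ 0)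

lemma mem_suppF {x : ι → ℝ} {i : ι} : i ∈ suppF x ↔ x i ≠ 0 := by
  simp [suppF]

lemma conforms_trans {x y g : ι → ℝ} (h1 : Conforms x y) (h2 : Conforms y g) :
    Conforms x g := by
  intro i hi
  have h2i := h2 i hi
  have hy : y i ≠ 0 := by
    intro h
    rw [h] at h2i
    simp at h2i
  have h1i := h1 i hy
  have hy2 : 0 < y i * y i := mul_self_pos.2 hy
  nlinarith [mul_pos h1i h2i]

lemma conforms_self (x : ι → ℝ) : Conforms x x := fun _ hi => mul_self_pos.2 hi

/-- Existence of an elementary vector conforming to `x`, by induction on support size. -/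
lemma exists_conform_elem_aux {W : Submodule ℝ (ι → ℝ)} (x : ι → ℝ) :
    ∀ N : ℕ, ∀ y : ι → ℝ, y ∈ W → y ≠ 0 → Conforms x y → (suppF y).card ≤ N →
    ∃ g, IsElementaryVec W g ∧ Conforms x g := by
  intro N
  induction N with
  | zero =>
    intro y hyW hy0 _ hcard
    exfalso
    apply hy0
    funext i
    by_contra hi
    have : i ∈ suppF y := mem_suppF.2 hi
    have := Finset.card_pos.2 ⟨i, this⟩
    omega
  | succ N ih =>
    intro y hyW hy0 hconf hcard
    by_cases helem : ∀ h : ι → ℝ, h ∈ W → h ≠ 0 → ¬ ({i | h i ≠ 0} ⊂ {i | y i ≠ 0})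
    · exact ⟨y, ⟨hyW, hy0, helem⟩, hconf⟩
    · push_neg at helem
      obtain ⟨h, hhW, hh0, hss⟩ := helem
      have hsub : ∀ i, h i ≠ 0 → y i ≠ 0 := fun i hi => hss.1 hi
      obtain ⟨i0, hi0⟩ : ∃ i, h i ≠ 0 := by
        by_contra hc
        push_neg at hc
        exact hh0 (funext fun i => hc i)
      obtain ⟨is, hismem, hismin⟩ :=
        Finset.exists_min_image (suppF h) (fun i => |y i / h i|) ⟨i0, mem_suppF.2 hi0⟩
      have hhis : h is ≠ 0 := mem_suppF.1 hismem
      have hyis : y is ≠ 0 := hsub is hhis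
      set t : ℝ := y is / h is with ht
      set y' : ι → ℝ := y - t • h with hy'
      have hy'app : ∀ i, y' i = y i - t * h i := fun i => rfl
      have hy'is : y' is = 0 := by
        rw [hy'app, ht]
        field_simp
        ring
      have key : ∀ i, y' i ≠ 0 → 0 < y i * y' i := by
        intro i hi
        by_cases hhi : h i = 0
        · have : y' i = y i := by rw [hy'app, hhi]; ring
          rw [this]
          exact mul_self_pos.2 (this ▸ hi)
        · have hyi : y i ≠ 0 := hsub i hhi
          have hmin : |t| ≤ |y i / h i| := hismin i (mem_suppF.2 hhi)
          have e1 : |y i / h i| * |h i| = |y i| := by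
            rw [← abs_mul]
            congr 1
            field_simp
          have e2 : t * (y i * h i) ≤ |y i| ^ 2 := by
            calc t * (y i * h i) ≤ |t * (y i * h i)| := le_abs_self _
              _ = |t| * (|y i| * |h i|) := by rw [abs_mul, abs_mul]
              _ ≤ |y i / h i| * (|y i| * |h i|) :=
                  mul_le_mul_of_nonneg_right hmin (by positivity)
              _ = |y i| * (|y i / h i| * |h i|) := by ring
              _ = |y i| * |y i| := by rw [e1]
              _ = |y i| ^ 2 := (sq (|y i|)).symm
          have e3 : y i * y' i = y i ^ 2 - t * (y i * h i) := by
            rw [hy'app]; ring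
          have e4 : 0 ≤ y i * y' i := by
            rw [e3, ← sq_abs (y i)]
            linarith
          exact lt_of_le_of_ne e4 (Ne.symm (mul_ne_zero hyi hi))
      have hy'W : y' ∈ W := W.sub_mem hyW (W.smul_mem t hhW)
      have hy'0 : y' ≠ 0 := by
        obtain ⟨j, hjy, hjh⟩ : ∃ j, y j ≠ 0 ∧ ¬ h j ≠ 0 := by
          obtain ⟨j, hj1, hj2⟩ := Set.exists_of_ssubset hss
          exact ⟨j, hj1, hj2⟩
        push_neg at hjh
        intro hc
        have : y' j = 0 := by rw [hc]; rfl
        rw [hy'app, hjh] at this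
        apply hjy
        linarith
      have hy'conf : Conforms x y' := conforms_trans hconf key
      have hsscard : suppF y' ⊂ suppF y := by
        constructor
        · intro i hi
          have := key i (mem_suppF.1 hi)
          exact mem_suppF.2 (fun hz => by rw [hz] at this; simp at this)
        · intro hsub2
          have : is ∈ suppF y' := hsub2 (mem_suppF.2 hyis)
          exact (mem_suppF.1 this) hy'is
      have hcard' : (suppF y').card ≤ N := by
        have := Finset.card_lt_card hsscard
        omega
      exact ih y' hy'W hy'0 hy'conf hcard'

lemma exists_conform_elem {W : Submodule ℝ (ι → ℝ)} {x : ι → ℝ}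
    (hxW : x ∈ W) (hx0 : x ≠ 0) :
    ∃ g, IsElementaryVec W g ∧ Conforms x g :=
  exists_conform_elem_aux x (suppF x).card x hxW hx0 (conforms_self x) le_rfl

/-- Conformal decomposition into elementary vectors. -/
lemma conformal_decomposition_aux {W : Submodule ℝ (ι → ℝ)} :
    ∀ N : ℕ, ∀ x : ι → ℝ, x ∈ W → (suppF x).card ≤ N →
    ∃ (k : ℕ) (g : Fin k → ι → ℝ),
      (∀ ℓ, IsElementaryVec W (g ℓ) ∧ Conforms x (g ℓ)) ∧ x = ∑ ℓ, g ℓ := by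
  intro N
  induction N with
  | zero =>
    intro x hxW hcard
    have hx0 : x = 0 := by
      funext i
      by_contra hi
      have : i ∈ suppF x := mem_suppF.2 hi
      have := Finset.card_pos.2 ⟨i, this⟩
      omega
    exact ⟨0, fun ℓ => ℓ.elim0, fun ℓ => ℓ.elim0, by simp [hx0]⟩
  | succ N ih =>
    intro x hxW hcard
    by_cases hx0 : x = 0
    · exact ⟨0, fun ℓ => ℓ.elim0, fun ℓ => ℓ.elim0, by simp [hx0]⟩
    · obtain ⟨g0, hg0elem, hg0conf⟩ := exists_conform_elem hxW hx0
      obtain ⟨i1, hi1⟩ : ∃ i, g0 i ≠ 0 := by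
        by_contra hc
        push_neg at hc
        exact hg0elem.2.1 (funext fun i => hc i)
      obtain ⟨i0, hi0mem, hi0min⟩ :=
        Finset.exists_min_image (suppF g0) (fun i => x i / g0 i) ⟨i1, mem_suppF.2 hi1⟩
      have hg0i0 : g0 i0 ≠ 0 := mem_suppF.1 hi0mem
      set β : ℝ := x i0 / g0 i0 with hβ
      have hratio : ∀ i, g0 i ≠ 0 → 0 < x i / g0 i := by
        intro i hi
        have hpos := hg0conf i hi
        have : x i / g0 i = (x i * g0 i) / (g0 i) ^ 2 := by
          field_simp
        rw [this]
        positivity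
      have hβpos : 0 < β := hratio i0 hg0i0
      set x' : ι → ℝ := x - β • g0 with hx'
      have hx'app : ∀ i, x' i = x i - β * g0 i := fun i => rfl
      have hx'W : x' ∈ W := W.sub_mem hxW (W.smul_mem β hg0elem.1)
      have hx'conf : Conforms x x' := by
        intro i hi
        by_cases hg0i : g0 i = 0
        · have hxx : x' i = x i := by rw [hx'app, hg0i]; ring
          rw [hxx]
          exact mul_self_pos.2 (hxx ▸ hi)
        · have hxg : 0 < x i * g0 i := hg0conf i hg0i
          have hxi : x i ≠ 0 := fun hz => by rw [hz] at hxg; simp at hxg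
          have hble : β ≤ x i / g0 i := hi0min i (mem_suppF.2 hg0i)
          have e1 : β * (x i * g0 i) ≤ (x i / g0 i) * (x i * g0 i) :=
            mul_le_mul_of_nonneg_right hble (le_of_lt hxg)
          have e2 : (x i / g0 i) * (x i * g0 i) = x i ^ 2 := by
            field_simp
          have e3 : x i * x' i = x i ^ 2 - β * (x i * g0 i) := by
            rw [hx'app]; ring
          have e4 : 0 ≤ x i * x' i := by rw [e3]; linarith [e1, e2.le, e2.ge]
          exact lt_of_le_of_ne e4 (Ne.symm (mul_ne_zero hxi hi))
      have hx'i0 : x' i0 = 0 := by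
        rw [hx'app, hβ]
        field_simp
        ring
      have hxi0 : x i0 ≠ 0 := by
        have := hg0conf i0 hg0i0
        intro hz
        rw [hz] at this
        simp at this
      have hsscard : suppF x' ⊂ suppF x := by
        constructor
        · intro i hi
          have := hx'conf i (mem_suppF.1 hi)
          exact mem_suppF.2 (fun hz => by rw [hz] at this; simp at this)
        · intro hsub2
          have : i0 ∈ suppF x' := hsub2 (mem_suppF.2 hxi0)
          exact (mem_suppF.1 this) hx'i0
      have hcard' : (suppF x').card ≤ N := by
        have := Finset.card_lt_card hsscard
        omega
      obtain ⟨k, g, hprops, hsum⟩ := ih x' hx'W hcard'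
      refine ⟨k + 1, Fin.cons (β • g0) g, ?_, ?_⟩
      · intro ℓ
        refine Fin.cases ?_ ?_ ℓ
        · constructor
          · refine ⟨W.smul_mem β hg0elem.1, ?_, ?_⟩
            · simp only [Fin.cons_zero]
              exact smul_ne_zero (ne_of_gt hβpos) hg0elem.2.1
            · simp only [Fin.cons_zero]
              intro h hhW hh0 hss
              apply hg0elem.2.2 h hhW hh0
              convert hss using 2
              ext i
              simp [Pi.smul_apply, smul_eq_mul, mul_ne_zero_iff, ne_of_gt hβpos]
          · simp only [Fin.cons_zero]
            intro i hi
            have hg0i : g0 i ≠ 0 := by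
              intro hz
              apply hi
              simp [Pi.smul_apply, hz]
            have := hg0conf i hg0i
            have : 0 < β * (x i * g0 i) := mul_pos hβpos this
            calc (0:ℝ) < β * (x i * g0 i) := this
              _ = x i * (β • g0) i := by simp [Pi.smul_apply]; ring
        · intro ℓ'
          simp only [Fin.cons_succ]
          exact ⟨(hprops ℓ').1, conforms_trans hx'conf (hprops ℓ').2⟩
      · rw [Fin.sum_cons, ← hsum]
        funext i
        simp [hx'app i]

lemma conformal_decomposition {W : Submodule ℝ (ι → ℝ)} {x : ι → ℝ} (hxW : x ∈ W) :
    ∃ (k : ℕ) (g : Fin k → ι → ℝ),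
      (∀ ℓ, IsElementaryVec W (g ℓ) ∧ Conforms x (g ℓ)) ∧ x = ∑ ℓ, g ℓ :=
  conformal_decomposition_aux (suppF x).card x hxW le_rfl

lemma sum_abs_of_conforms {k : ℕ} {x : ι → ℝ} {g : Fin k → ι → ℝ}
    (hc : ∀ ℓ, Conforms x (g ℓ)) (hsum : x = ∑ ℓ, g ℓ) (i : ι) :
    ∑ ℓ, |g ℓ i| = |x i| := by
  have hxi : x i = ∑ ℓ, g ℓ i := by
    rw [hsum]
    simp
  rcases lt_trichotomy (x i) 0 with h | h | h
  · have hle : ∀ ℓ, g ℓ i ≤ 0 := by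
      intro ℓ
      by_contra hpos
      push_neg at hpos
      have := hc ℓ i (ne_of_gt hpos)
      nlinarith
    rw [abs_of_neg h, hxi, ← Finset.sum_neg_distrib]
    exact Finset.sum_congr rfl fun ℓ _ => abs_of_nonpos (hle ℓ)
  · have hz : ∀ ℓ, g ℓ i = 0 := by
      intro ℓ
      by_contra hne
      have := hc ℓ i hne
      rw [h] at this
      simp at this
    simp [hz, h]
  · have hle : ∀ ℓ, 0 ≤ g ℓ i := by
      intro ℓ
      by_contra hneg
      push_neg at hneg
      have := hc ℓ i (ne_of_lt hneg)
      nlinarith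
    rw [abs_of_pos h, hxi]
    exact Finset.sum_congr rfl fun ℓ _ => abs_of_nonneg (hle ℓ)

lemma kappa_nonneg {W : Submodule ℝ (ι → ℝ)} : 0 ≤ kappaSub W := by
  unfold kappaSub
  split
  · norm_num
  · apply Real.sSup_nonneg
    rintro t ⟨g, _, i, j, _, _, rfl⟩
    exact abs_nonneg _

/-- Elementary vectors with the same support have proportional entries. -/
lemma elementary_ratio_eq {W : Submodule ℝ (ι → ℝ)} {g g' : ι → ℝ}
    (hg : IsElementaryVec W g) (hg' : IsElementaryVec W g')
    (hsupp : {i | g i ≠ 0} = {i | g' i ≠ 0}) (i j : ι) (hi : g i ≠ 0) :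
    |g j / g i| = |g' j / g' i| := by
  have hi' : g' i ≠ 0 := by
    have : i ∈ {i | g i ≠ 0} := hi
    rw [hsupp] at this
    exact this
  set c : ℝ := g i / g' i with hc
  have hcne : c ≠ 0 := div_ne_zero hi hi'
  have h0 : g - c • g' = 0 := by
    by_contra hne
    apply hg.2.2 (g - c • g') (W.sub_mem hg.1 (W.smul_mem c hg'.1)) hne
    constructor
    · intro l hl
      simp only [Set.mem_setOf_eq, Pi.sub_apply, Pi.smul_apply, smul_eq_mul] at hl ⊢
      by_contra hgl
      have hgl' : g' l = 0 := by
        have : l ∉ {i | g' i ≠ 0} := by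
          rw [← hsupp]
          simpa using hgl
        simpa using this
      apply hl
      rw [hgl, hgl']
      ring
    · intro hsub
      have : (g - c • g') i = 0 := by
        simp only [Pi.sub_apply, Pi.smul_apply, smul_eq_mul, hc]
        field_simp
        ring
      exact (hsub hi) this
  have hprop : ∀ l, g l = c * g' l := by
    intro l
    have := congrFun h0 l
    simp only [Pi.sub_apply, Pi.smul_apply, smul_eq_mul, Pi.zero_apply] at this
    linarith
  rw [hprop j, hprop i, mul_div_mul_left _ _ hcne]

lemma kappa_bddAbove (W : Submodule ℝ (ι → ℝ)) :
    BddAbove {t : ℝ | ∃ g : ι → ℝ, IsElementaryVec W g ∧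
      ∃ i j : ι, g i ≠ 0 ∧ g j ≠ 0 ∧ t = |g j / g i|} := by
  classical
  set eV : Set ι → (ι → ℝ) := fun T =>
    if h : ∃ g : ι → ℝ, IsElementaryVec W g ∧ {i | g i ≠ 0} = T then h.choose else 0
    with heV
  apply Set.Finite.bddAbove
  apply Set.Finite.subset
    (Set.finite_univ.image (fun p : Set ι × ι × ι => |eV p.1 p.2.2 / eV p.1 p.2.1|))
  rintro t ⟨g, hg, i, j, hi, hj, rfl⟩
  refine ⟨⟨{i | g i ≠ 0}, i, j⟩, Set.mem_univ _, ?_⟩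
  have hex : ∃ g' : ι → ℝ, IsElementaryVec W g' ∧ {i | g' i ≠ 0} = {i | g i ≠ 0} :=
    ⟨g, hg, rfl⟩
  have heq : eV {i | g i ≠ 0} = hex.choose := by
    rw [heV]
    simp only
    rw [dif_pos hex]
  have hspec := hex.choose_spec
  show |eV {i | g i ≠ 0} j / eV {i | g i ≠ 0} i| = |g j / g i|
  rw [heq]
  exact (elementary_ratio_eq hg hspec.1 hspec.2.symm i j hi).symm

lemma abs_le_kappa_mul {W : Submodule ℝ (ι → ℝ)} (hbot : W ≠ ⊥) (htop : W ≠ ⊤)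
    {g : ι → ℝ} (hg : IsElementaryVec W g) {i j : ι} (hi : g i ≠ 0) (hj : g j ≠ 0) :
    |g j| ≤ kappaSub W * |g i| := by
  have hratio : |g j / g i| ≤ kappaSub W := by
    unfold kappaSub
    rw [if_neg (not_or.2 ⟨hbot, htop⟩)]
    exact le_csSup (kappa_bddAbove W) ⟨g, hg, i, j, hi, hj, rfl⟩
  calc |g j| = |g j / g i| * |g i| := by
        rw [abs_div]
        field_simp
    _ ≤ kappaSub W * |g i| := mul_le_mul_of_nonneg_right hratio (abs_nonneg _)

/-- Elementary vectors of `X_A` have support of size at most `m + 1`. -/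
lemma elementary_card_le {m n : ℕ} (A : Matrix (Fin m) (Fin n) ℝ)
    {g : Fin n ⊕ Fin m → ℝ} (hg : IsElementaryVec (XA A) g) :
    (suppF g).card ≤ m + 1 := by
  by_contra hcard
  push_neg at hcard
  set M : Matrix (Fin m) (Fin n ⊕ Fin m) ℝ := Matrix.fromCols A (-1) with hM
  obtain ⟨T, hTsub, hTcard⟩ := Finset.exists_subset_card_eq (le_of_lt hcard)
  have hnotli : ¬ LinearIndependent ℝ (fun (j : ↥T) => (fun i => M i j.1 : Fin m → ℝ)) := by
    intro hli
    have := hli.fintype_card_le_finrank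
    rw [Module.finrank_fintype_fun_eq_card, Fintype.card_coe, Fintype.card_fin] at this
    omega
  obtain ⟨c, hcsum, j0, hcj0⟩ := Fintype.not_linearIndependent_iff.1 hnotli
  set h : Fin n ⊕ Fin m → ℝ := fun i => if hi : i ∈ T then c ⟨i, hi⟩ else 0 with hh
  have hhW : h ∈ XA A := by
    rw [XA, LinearMap.mem_ker]
    ext i
    rw [Matrix.mulVecLin_apply]
    have e1 : M.mulVec h i = ∑ j : Fin n ⊕ Fin m, M i j * h j := by
      simp [Matrix.mulVec, dotProduct]
    have e2 : ∑ j : Fin n ⊕ Fin m, M i j * h j = ∑ j ∈ T, M i j * h j := by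
      symm
      apply Finset.sum_subset (Finset.subset_univ T)
      intro j _ hjT
      have : h j = 0 := by rw [hh]; simp [hjT]
      rw [this, mul_zero]
    have e3 : ∑ j ∈ T, M i j * h j = ∑ j : ↥T, M i j.1 * c j := by
      rw [← Finset.sum_coe_sort T (fun j => M i j * h j)]
      apply Finset.sum_congr rfl
      intro j _
      congr 1
      rw [hh]
      simp [j.2]
    have e4 : ∑ j : ↥T, M i j.1 * c j = 0 := by
      have := congrFun hcsum i
      simpa [mul_comm] using this
    rw [← hM, e1, e2, e3, e4]
    rfl
  have hh0 : h ≠ 0 := by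
    intro hc
    apply hcj0
    have : h j0.1 = 0 := by rw [hc]; rfl
    rw [hh] at this
    simpa [j0.2] using this
  obtain ⟨iw, hiwg, hiwT⟩ : ∃ i, i ∈ suppF g ∧ i ∉ T := by
    by_contra hcon
    push_neg at hcon
    have : suppF g ⊆ T := fun i hi => hcon i hi
    have := Finset.card_le_card this
    omega
  apply hg.2.2 h hhW hh0
  constructor
  · intro i hi
    simp only [Set.mem_setOf_eq] at hi ⊢
    have hiT : i ∈ T := by
      by_contra hiT
      apply hi
      rw [hh]
      simp [hiT]
    exact mem_suppF.1 (hTsub hiT)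
  · intro hsub
    have : h iw ≠ 0 := hsub (mem_suppF.1 hiwg)
    apply this
    rw [hh]
    simp [hiwT]

end CFP

open CFP in
/-- If `z ∈ ℝ^n` is cycle-free with respect to `A` (no nonzero
`y ∈ ker A` conforms to `z`), then `‖z‖_∞ ≤ κ(X_A)·‖Az‖₁` and
`‖z‖₂ ≤ m·κ(X_A)·‖Az‖₂`. -/
theorem cycle_free_proximity {m n : ℕ} (A : Matrix (Fin m) (Fin n) ℝ) (z : Fin n → ℝ)
    (hcf : ¬ ∃ y : Fin n → ℝ, y ≠ 0 ∧ A.mulVec y = 0 ∧ Conforms z y) :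
    (⨆ i, |z i|) ≤ kappaSub (XA A) * ∑ j, |A.mulVec z j| ∧
    Real.sqrt (∑ i, (z i) ^ 2) ≤
      m * kappaSub (XA A) * Real.sqrt (∑ j, (A.mulVec z j) ^ 2) := by
  by_cases hz : z = 0
  · subst hz
    constructor
    · apply Real.iSup_le
      · intro i
        simp only [Pi.zero_apply, abs_zero]
        exact mul_nonneg kappa_nonneg (Finset.sum_nonneg fun j _ => abs_nonneg _)
      · exact mul_nonneg kappa_nonneg (Finset.sum_nonneg fun j _ => abs_nonneg _)
    · simp only [Pi.zero_apply]
      rw [show ∑ i : Fin n, (0:ℝ) ^ 2 = 0 by simp, Real.sqrt_zero]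
      have h1 : (0:ℝ) ≤ (m : ℝ) * kappaSub (XA A) :=
        mul_nonneg (Nat.cast_nonneg m) kappa_nonneg
      exact mul_nonneg h1 (Real.sqrt_nonneg _)
  · -- z ≠ 0
    have hm : 0 < m := by
      rcases Nat.eq_zero_or_pos m with h | h
      · exfalso
        apply hcf
        refine ⟨z, hz, ?_, conforms_self z⟩
        subst h
        exact funext fun j => j.elim0
      · exact h
    set x : Fin n ⊕ Fin m → ℝ := Sum.elim z (A.mulVec z) with hx
    have hxW : x ∈ XA A := by
      rw [XA, LinearMap.mem_ker, Matrix.mulVecLin_apply, hx,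
        Matrix.fromCols_mulVec_sumElim, Matrix.neg_mulVec, Matrix.one_mulVec]
      exact add_neg_cancel _
    have hx0 : x ≠ 0 := by
      intro hc
      apply hz
      funext i
      have := congrFun hc (Sum.inl i)
      simpa [hx] using this
    have hbot : XA A ≠ ⊥ := by
      intro hb
      rw [hb, Submodule.mem_bot] at hxW
      exact hx0 hxW
    have htop : XA A ≠ ⊤ := by
      intro ht
      have hmem : (Sum.elim 0 (fun _ => (1:ℝ)) : Fin n ⊕ Fin m → ℝ) ∈ XA A := by
        rw [ht]; trivial
      rw [XA, LinearMap.mem_ker, Matrix.mulVecLin_apply,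
        Matrix.fromCols_mulVec_sumElim, Matrix.neg_mulVec, Matrix.one_mulVec,
        Matrix.mulVec_zero] at hmem
      have := congrFun hmem ⟨0, hm⟩
      norm_num at this
    set κ : ℝ := kappaSub (XA A) with hκ
    have hκ0 : 0 ≤ κ := kappa_nonneg
    obtain ⟨k, g, hprops, hsum⟩ := conformal_decomposition hxW
    set u : Fin k → Fin n → ℝ := fun ℓ i => g ℓ (Sum.inl i) with hu
    set v : Fin k → Fin m → ℝ := fun ℓ j => g ℓ (Sum.inr j) with hv
    have hgel : ∀ ℓ, g ℓ = Sum.elim (u ℓ) (v ℓ) := by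
      intro ℓ
      funext i
      rcases i with i | j
      · rfl
      · rfl
    have hAu : ∀ ℓ, A.mulVec (u ℓ) = v ℓ := by
      intro ℓ
      have := (hprops ℓ).1.1
      rw [XA, LinearMap.mem_ker, Matrix.mulVecLin_apply, hgel ℓ,
        Matrix.fromCols_mulVec_sumElim, Matrix.neg_mulVec, Matrix.one_mulVec] at this
      funext j
      have := congrFun this j
      simp only [Pi.add_apply, Pi.neg_apply, Pi.zero_apply] at this
      linarith
    have hv0 : ∀ ℓ, ∃ j, v ℓ j ≠ 0 := by
      intro ℓ
      by_contra hc
      push_neg at hc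
      have hvz : v ℓ = 0 := funext hc
      have hu0 : u ℓ ≠ 0 := by
        intro hc2
        apply (hprops ℓ).1.2.1
        rw [hgel ℓ, hc2, hvz]
        funext i
        rcases i with i | j <;> rfl
      apply hcf
      refine ⟨u ℓ, hu0, by rw [hAu ℓ, hvz], ?_⟩
      intro i hi
      have := (hprops ℓ).2 (Sum.inl i) (by rw [hgel ℓ]; exact hi)
      simpa [hx, hgel ℓ] using this
    choose jv hjv using hv0
    -- key componentwise bound
    have hkey : ∀ ℓ i, |u ℓ i| ≤ κ * |v ℓ (jv ℓ)| := by
      intro ℓ i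
      by_cases hui : u ℓ i = 0
      · rw [hui, abs_zero]
        positivity
      · have h1 : g ℓ (Sum.inr (jv ℓ)) ≠ 0 := hjv ℓ
        have h2 : g ℓ (Sum.inl i) ≠ 0 := hui
        have := abs_le_kappa_mul hbot htop (hprops ℓ).1 h1 h2
        calc |u ℓ i| = |g ℓ (Sum.inl i)| := rfl
          _ ≤ κ * |g ℓ (Sum.inr (jv ℓ))| := this
          _ = κ * |v ℓ (jv ℓ)| := rfl
    have habsz : ∀ i, ∑ ℓ, |u ℓ i| = |z i| := by
      intro i
      have := sum_abs_of_conforms (fun ℓ => (hprops ℓ).2) hsum (Sum.inl i)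
      simpa [hx] using this
    have habsAz : ∀ j, ∑ ℓ, |v ℓ j| = |A.mulVec z j| := by
      intro j
      have := sum_abs_of_conforms (fun ℓ => (hprops ℓ).2) hsum (Sum.inr j)
      simpa [hx] using this
    set B : ℝ := ∑ ℓ, |v ℓ (jv ℓ)| with hB
    have hB1 : B ≤ ∑ j, |A.mulVec z j| := by
      rw [hB]
      calc ∑ ℓ, |v ℓ (jv ℓ)| ≤ ∑ ℓ, ∑ j, |v ℓ j| := by
            apply Finset.sum_le_sum
            intro ℓ _
            exact Finset.single_le_sum (fun j _ => abs_nonneg (v ℓ j)) (Finset.mem_univ _)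
        _ = ∑ j, ∑ ℓ, |v ℓ j| := Finset.sum_comm
        _ = ∑ j, |A.mulVec z j| := Finset.sum_congr rfl fun j _ => habsAz j
    have hzi : ∀ i, |z i| ≤ κ * ∑ j, |A.mulVec z j| := by
      intro i
      calc |z i| = ∑ ℓ, |u ℓ i| := (habsz i).symm
        _ ≤ ∑ ℓ, κ * |v ℓ (jv ℓ)| := Finset.sum_le_sum fun ℓ _ => hkey ℓ i
        _ = κ * B := by rw [hB, Finset.mul_sum]
        _ ≤ κ * ∑ j, |A.mulVec z j| := mul_le_mul_of_nonneg_left hB1 hκ0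
    constructor
    · apply Real.iSup_le hzi
      positivity
    · -- ℓ² bound
      -- support of u ℓ has size ≤ m
      have hsupp_u : ∀ ℓ, (suppF (u ℓ)).card ≤ m := by
        intro ℓ
        have hcard_g : (suppF (g ℓ)).card ≤ m + 1 := elementary_card_le A (hprops ℓ).1
        have himg : (suppF (u ℓ)).image Sum.inl ⊆
            suppF (g ℓ) \ {Sum.inr (jv ℓ)} := by
          intro i hi
          obtain ⟨i', hi', rfl⟩ := Finset.mem_image.1 hi
          rw [Finset.mem_sdiff]
          constructor
          · have h4 : u ℓ i' ≠ 0 := mem_suppF.1 hi'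
            have h5 : g ℓ (Sum.inl i') ≠ 0 := h4
            exact mem_suppF.2 h5
          · simp
        have hinr : Sum.inr (jv ℓ) ∈ suppF (g ℓ) := mem_suppF.2 (hjv ℓ)
        have h1 : ((suppF (u ℓ)).image Sum.inl).card ≤
            (suppF (g ℓ) \ {Sum.inr (jv ℓ)}).card := Finset.card_le_card himg
        rw [Finset.card_image_of_injective _ Sum.inl_injective] at h1
        have h2 : (suppF (g ℓ) \ {Sum.inr (jv ℓ)}).card = (suppF (g ℓ)).card - 1 := by
          rw [Finset.card_sdiff_of_subset (Finset.singleton_subset_iff.2 hinr), Finset.card_singleton]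
        omega
      -- ℓ² norm of u ℓ
      have hnorm_u : ∀ ℓ, Real.sqrt (∑ i, (u ℓ i) ^ 2) ≤
          Real.sqrt m * (κ * |v ℓ (jv ℓ)|) := by
        intro ℓ
        have hsum_le : ∑ i, (u ℓ i) ^ 2 ≤ (m : ℝ) * (κ * |v ℓ (jv ℓ)|) ^ 2 := by
          have e1 : ∑ i, (u ℓ i) ^ 2 = ∑ i ∈ suppF (u ℓ), (u ℓ i) ^ 2 := by
            symm
            apply Finset.sum_subset (Finset.subset_univ _)
            intro i _ hi
            have : u ℓ i = 0 := by
              by_contra hne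
              exact hi (mem_suppF.2 hne)
            rw [this]
            ring
          rw [e1]
          calc ∑ i ∈ suppF (u ℓ), (u ℓ i) ^ 2
              ≤ ∑ _i ∈ suppF (u ℓ), (κ * |v ℓ (jv ℓ)|) ^ 2 := by
                apply Finset.sum_le_sum
                intro i _
                rw [← sq_abs (u ℓ i)]
                apply pow_le_pow_left₀ (abs_nonneg _) (hkey ℓ i)
            _ = (suppF (u ℓ)).card * (κ * |v ℓ (jv ℓ)|) ^ 2 := by
                rw [Finset.sum_const, nsmul_eq_mul]
            _ ≤ (m : ℝ) * (κ * |v ℓ (jv ℓ)|) ^ 2 := by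
                apply mul_le_mul_of_nonneg_right _ (by positivity)
                exact_mod_cast hsupp_u ℓ
        calc Real.sqrt (∑ i, (u ℓ i) ^ 2)
            ≤ Real.sqrt ((m : ℝ) * (κ * |v ℓ (jv ℓ)|) ^ 2) := Real.sqrt_le_sqrt hsum_le
          _ = Real.sqrt m * (κ * |v ℓ (jv ℓ)|) := by
              rw [Real.sqrt_mul (Nat.cast_nonneg m), Real.sqrt_sq (by positivity)]
      -- triangle inequality in ℓ²
      set e := WithLp.linearEquiv 2 ℝ (Fin n → ℝ) with he
      have hnorm_eq : ∀ w : Fin n → ℝ, ‖e.symm w‖ = Real.sqrt (∑ i, w i ^ 2) := by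
        intro w
        rw [EuclideanSpace.norm_eq]
        congr 1
        apply Finset.sum_congr rfl
        intro i _
        rw [Real.norm_eq_abs, sq_abs]
        rfl
      have hzsum : e.symm z = ∑ ℓ, e.symm (u ℓ) := by
        rw [← map_sum]
        congr 1
        funext i
        have := congrFun hsum (Sum.inl i)
        simp only [Finset.sum_apply] at this
        simpa [hx] using this
      have htri : Real.sqrt (∑ i, (z i) ^ 2) ≤ ∑ ℓ, Real.sqrt (∑ i, (u ℓ i) ^ 2) := by
        rw [← hnorm_eq z]
        calc ‖e.symm z‖ = ‖∑ ℓ, e.symm (u ℓ)‖ := by rw [hzsum]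
          _ ≤ ∑ ℓ, ‖e.symm (u ℓ)‖ := norm_sum_le _ _
          _ = ∑ ℓ, Real.sqrt (∑ i, (u ℓ i) ^ 2) :=
              Finset.sum_congr rfl fun ℓ _ => hnorm_eq (u ℓ)
      -- ℓ¹-ℓ² comparison for Az
      have hl1l2 : ∑ j, |A.mulVec z j| ≤
          Real.sqrt m * Real.sqrt (∑ j, (A.mulVec z j) ^ 2) := by
        have hcs : (∑ j, |A.mulVec z j|) ^ 2 ≤ (m : ℝ) * ∑ j, (A.mulVec z j) ^ 2 := by
          have := sq_sum_le_card_mul_sum_sq (s := Finset.univ)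
            (f := fun j => |A.mulVec z j|)
          simp only [Finset.card_univ, Fintype.card_fin, sq_abs] at this
          exact_mod_cast this
        calc ∑ j, |A.mulVec z j|
            = Real.sqrt ((∑ j, |A.mulVec z j|) ^ 2) := by
              rw [Real.sqrt_sq (by positivity)]
          _ ≤ Real.sqrt ((m : ℝ) * ∑ j, (A.mulVec z j) ^ 2) := Real.sqrt_le_sqrt hcs
          _ = Real.sqrt m * Real.sqrt (∑ j, (A.mulVec z j) ^ 2) := by
              rw [Real.sqrt_mul (Nat.cast_nonneg m)]
      calc Real.sqrt (∑ i, (z i) ^ 2)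
          ≤ ∑ ℓ, Real.sqrt (∑ i, (u ℓ i) ^ 2) := htri
        _ ≤ ∑ ℓ, Real.sqrt m * (κ * |v ℓ (jv ℓ)|) :=
            Finset.sum_le_sum fun ℓ _ => hnorm_u ℓ
        _ = Real.sqrt m * κ * B := by
            rw [hB, Finset.mul_sum]
            apply Finset.sum_congr rfl
            intro ℓ _
            ring
        _ ≤ Real.sqrt m * κ * ∑ j, |A.mulVec z j| := by
            apply mul_le_mul_of_nonneg_left hB1 (by positivity)
        _ ≤ Real.sqrt m * κ * (Real.sqrt m * Real.sqrt (∑ j, (A.mulVec z j) ^ 2)) := by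
            apply mul_le_mul_of_nonneg_left hl1l2 (by positivity)
        _ = (Real.sqrt m * Real.sqrt m) * κ * Real.sqrt (∑ j, (A.mulVec z j) ^ 2) := by
            ring
        _ = m * κ * Real.sqrt (∑ j, (A.mulVec z j) ^ 2) := by
            rw [Real.mul_self_sqrt (Nat.cast_nonneg m)]

end
end

section
/- For every nonzero matrix A ∈ ℝ^{m×n}, one has n·κ(X_A)·‖A‖₁ ≥ 1. -/
open BigOperators Finset

noncomputable section

open Classical

-- finiteness of ratio set
lemma ratioSet_finite {ι : Type*} [Fintype ι] (W : Submodule ℝ (ι → ℝ)) :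
    {t : ℝ | ∃ g : ι → ℝ, IsElementaryVec W g ∧
      ∃ i j : ι, g i ≠ 0 ∧ g j ≠ 0 ∧ t = |g j / g i|}.Finite := by
  have hsub : {t : ℝ | ∃ g : ι → ℝ, IsElementaryVec W g ∧
      ∃ i j : ι, g i ≠ 0 ∧ g j ≠ 0 ∧ t = |g j / g i|} ⊆
      ⋃ (T : Set ι) (i : ι) (j : ι),
        {t | ∃ g : ι → ℝ, IsElementaryVec W g ∧ {k | g k ≠ 0} = T ∧
          g i ≠ 0 ∧ g j ≠ 0 ∧ t = |g j / g i|} := by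
    rintro t ⟨g, hg, i, j, hi, hj, ht⟩
    exact Set.mem_iUnion.2 ⟨{k | g k ≠ 0}, Set.mem_iUnion.2 ⟨i, Set.mem_iUnion.2
      ⟨j, ⟨g, hg, rfl, hi, hj, ht⟩⟩⟩⟩
  refine Set.Finite.subset ?_ hsub
  refine Set.finite_iUnion fun T => Set.finite_iUnion fun i => Set.finite_iUnion fun j => ?_
  apply Set.Subsingleton.finite
  rintro t ⟨g, hg, hT, hi, hj, ht⟩ t' ⟨g', hg', hT', hi', hj', ht'⟩
  -- show g = c • g'
  have hgi' : g' i ≠ 0 := by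
    have : i ∈ {k | g' k ≠ 0} := by rw [hT', ← hT]; exact hi
    exact this
  set c : ℝ := g i / g' i with hc
  have hcne : c ≠ 0 := div_ne_zero hi hgi'
  have hW : g - c • g' ∈ W := Submodule.sub_mem W hg.1 (Submodule.smul_mem W c hg'.1)
  have hzero : g - c • g' = 0 := by
    by_contra hne
    refine hg.2.2 (g - c • g') hW hne ?_
    constructor
    · intro k hk
      simp only [Set.mem_setOf_eq, Pi.sub_apply, Pi.smul_apply, smul_eq_mul] at hk ⊢
      by_contra hgk
      have hg'k : g' k = 0 := by
        by_contra hg'k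
        have : k ∈ {k | g k ≠ 0} := by rw [hT, ← hT']; exact hg'k
        exact this hgk
      apply hk; rw [hgk, hg'k]; ring
    · intro hsub2
      have : i ∈ {k | (g - c • g') k ≠ 0} := hsub2 hi
      apply this
      simp only [Pi.sub_apply, Pi.smul_apply, smul_eq_mul, hc]
      field_simp
      ring
  have hgeq : g = fun k => c * g' k := by
    funext k
    have := congrFun hzero k
    simp only [Pi.sub_apply, Pi.smul_apply, smul_eq_mul, Pi.zero_apply, sub_eq_zero] at this
    exact this
  rw [ht, ht', hgeq]
  rw [mul_div_mul_left _ _ hcne]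

-- existence of elementary vector with nonzero coordinate in K
lemma exists_elementary {ι : Type*} [Fintype ι] (W : Submodule ℝ (ι → ℝ)) (K : Set ι) :
    ∀ N : ℕ, ∀ x : ι → ℝ, (Finset.univ.filter (fun k => x k ≠ 0)).card ≤ N → x ∈ W →
      (∃ k ∈ K, x k ≠ 0) →
      ∃ g : ι → ℝ, IsElementaryVec W g ∧ ∃ k ∈ K, g k ≠ 0 := by
  intro N
  induction N with
  | zero =>
    intro x hcard _ ⟨k, _, hk⟩
    exact absurd (Finset.card_eq_zero.1 (Nat.le_zero.1 hcard) ▸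
      Finset.mem_filter.2 ⟨Finset.mem_univ k, hk⟩) (Finset.notMem_empty k)
  | succ N ih =>
    intro x hcard hxW hxK
    by_cases hel : IsElementaryVec W x
    · exact ⟨x, hel, hxK⟩
    · have hxne : x ≠ 0 := by
        obtain ⟨k, _, hk⟩ := hxK
        intro h0; exact hk (congrFun h0 k)
      rw [IsElementaryVec] at hel
      push_neg at hel
      obtain ⟨h, hhW, hhne, hss⟩ := hel hxW hxne
      have hcard_lt : ∀ y : ι → ℝ, {i | y i ≠ 0} ⊂ {i | x i ≠ 0} →
          (Finset.univ.filter (fun k => y k ≠ 0)).card ≤ N := by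
        intro y hy
        have hfs : (Finset.univ.filter (fun k => y k ≠ 0)) ⊂
            (Finset.univ.filter (fun k => x k ≠ 0)) := by
          constructor
          · intro k hk
            exact Finset.mem_filter.2 ⟨Finset.mem_univ k,
              hy.1 (Finset.mem_filter.1 hk).2⟩
          · intro hsub
            apply hy.2
            intro k hk
            exact (Finset.mem_filter.1 (hsub (Finset.mem_filter.2
              ⟨Finset.mem_univ k, hk⟩))).2
        have := Finset.card_lt_card hfs
        omega
      by_cases hK : ∃ k ∈ K, h k ≠ 0
      · exact ih h (hcard_lt h hss) hhW hK
      · push_neg at hK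
        obtain ⟨k₀, hk₀⟩ : ∃ k₀, h k₀ ≠ 0 := by
          by_contra hall; push_neg at hall
          exact hhne (funext fun k => hall k)
        set x' : ι → ℝ := x - (x k₀ / h k₀) • h with hx'
        have hx'W : x' ∈ W := Submodule.sub_mem W hxW
          (Submodule.smul_mem W _ hhW)
        have hx'K : ∃ k ∈ K, x' k ≠ 0 := by
          obtain ⟨k, hkK, hk⟩ := hxK
          refine ⟨k, hkK, ?_⟩
          simp only [hx', Pi.sub_apply, Pi.smul_apply, smul_eq_mul, hK k hkK, mul_zero,
            sub_zero]
          exact hk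
        have hss' : {i | x' i ≠ 0} ⊂ {i | x i ≠ 0} := by
          constructor
          · intro k hk
            simp only [Set.mem_setOf_eq, hx', Pi.sub_apply, Pi.smul_apply, smul_eq_mul] at hk ⊢
            by_contra hxk
            have hhk : h k = 0 := by
              by_contra hhk
              exact (hss.1 hhk) hxk
            apply hk; rw [hxk, hhk]; ring
          · intro hsub
            have hxk₀ : x k₀ ≠ 0 := hss.1 hk₀
            have : x' k₀ ≠ 0 := hsub hxk₀
            apply this
            simp only [hx', Pi.sub_apply, Pi.smul_apply, smul_eq_mul]
            field_simp
            ring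
        exact ih x' (hcard_lt x' hss') hx'W hx'K

lemma mem_XA_iff {m n : ℕ} (A : Matrix (Fin m) (Fin n) ℝ) (v : Fin n ⊕ Fin m → ℝ) :
    v ∈ XA A ↔ ∀ i, v (Sum.inr i) = ∑ j, A i j * v (Sum.inl j) := by
  rw [XA, LinearMap.mem_ker]
  simp only [Matrix.mulVecLin_apply, Matrix.mulVec, Matrix.fromCols, dotProduct,
    Fintype.sum_sum_type, funext_iff, Pi.zero_apply]
  refine forall_congr' fun i => ?_
  simp [Matrix.neg_apply, Matrix.one_apply, ite_mul, eq_comm, sub_eq_zero,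
    Finset.sum_ite_eq, eq_comm]
  constructor
  · intro h; linarith [h]
  · intro h; linarith [h]

/-- For every nonzero matrix `A ∈ ℝ^{m×n}`, `n·κ(X_A)·‖A‖₁ ≥ 1`,
where `‖A‖₁ = max_j Σ_i |a_{ij}|` is the maximum column ℓ₁-norm. -/
theorem kappa_matNorm_lower_bound {m n : ℕ} (A : Matrix (Fin m) (Fin n) ℝ) (hA : A ≠ 0) :
    1 ≤ (n : ℝ) * kappaSub (XA A) * (⨆ j, ∑ i, |A i j|) := by
  obtain ⟨i₀, j₀, hij⟩ : ∃ i j, A i j ≠ 0 := by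
    by_contra h; push_neg at h
    exact hA (Matrix.ext fun i j => h i j)
  set C : ℝ := ⨆ j, ∑ i, |A i j| with hC
  -- basic bounds on C
  have hentC : ∀ i j, |A i j| ≤ C := by
    intro i j
    refine le_trans (Finset.single_le_sum (fun i' _ => abs_nonneg (A i' j))
      (Finset.mem_univ i)) ?_
    exact le_ciSup (f := fun j => ∑ i, |A i j|) (Set.Finite.bddAbove (Set.finite_range _)) j
  have hCpos : 0 < C := lt_of_lt_of_le (abs_pos.2 hij) (hentC i₀ j₀)
  -- the witness vector
  set x : Fin n ⊕ Fin m → ℝ := Sum.elim (Pi.single j₀ 1) (fun i => A i j₀) with hx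
  have hxW : x ∈ XA A := by
    rw [mem_XA_iff]
    intro i
    simp only [hx, Sum.elim_inr, Sum.elim_inl]
    rw [Finset.sum_eq_single j₀]
    · simp
    · intro j _ hj; simp [Pi.single_eq_of_ne hj]
    · intro h; exact absurd (Finset.mem_univ j₀) h
  -- XA A is neither ⊥ nor ⊤
  have hnbot : XA A ≠ ⊥ := by
    intro hb
    have : x = 0 := by rw [← Submodule.mem_bot ℝ, ← hb]; exact hxW
    have := congrFun this (Sum.inl j₀)
    simp [hx] at this
  have hntop : XA A ≠ ⊤ := by
    intro ht
    have : (Sum.elim 0 (Pi.single i₀ 1) : Fin n ⊕ Fin m → ℝ) ∈ XA A := by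
      rw [ht]; trivial
    rw [mem_XA_iff] at this
    have := this i₀
    simp at this
  -- get an elementary vector with nonzero second part
  obtain ⟨g, hg, k, hkK, hgk⟩ := exists_elementary (XA A) (Set.range Sum.inr)
    (Finset.univ.filter (fun k => x k ≠ 0)).card x le_rfl hxW
    ⟨Sum.inr i₀, Set.mem_range_self i₀, by simp [hx]; exact hij⟩
  obtain ⟨i, rfl⟩ := hkK
  -- pick j* maximizing |g (inl j)|
  have hn : 0 < n := Fin.pos_iff_nonempty.mpr ⟨j₀⟩
  obtain ⟨js, _, hjs⟩ := Finset.exists_max_image Finset.univ (fun j => |g (Sum.inl j)|)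
    ⟨j₀, Finset.mem_univ j₀⟩
  -- the key bound
  have hbound : |g (Sum.inr i)| ≤ (n : ℝ) * C * |g (Sum.inl js)| := by
    have hmem := (mem_XA_iff A g).1 hg.1 i
    calc |g (Sum.inr i)| = |∑ j, A i j * g (Sum.inl j)| := by rw [hmem]
      _ ≤ ∑ j, |A i j * g (Sum.inl j)| := Finset.abs_sum_le_sum_abs _ _
      _ ≤ ∑ _j : Fin n, C * |g (Sum.inl js)| := by
          refine Finset.sum_le_sum fun j _ => ?_
          rw [abs_mul]
          exact mul_le_mul (hentC i j) (hjs j (Finset.mem_univ j)) (abs_nonneg _)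
            (le_of_lt hCpos)
      _ = (n : ℝ) * C * |g (Sum.inl js)| := by
          rw [Finset.sum_const, Finset.card_univ, Fintype.card_fin, nsmul_eq_mul]; ring
  have hgjs : g (Sum.inl js) ≠ 0 := by
    intro h0
    rw [h0, abs_zero, mul_zero] at hbound
    exact hgk (abs_eq_zero.1 (le_antisymm hbound (abs_nonneg _)))
  -- the ratio t
  set t : ℝ := |g (Sum.inl js) / g (Sum.inr i)| with htdef
  have htmem : t ∈ {t : ℝ | ∃ g : Fin n ⊕ Fin m → ℝ, IsElementaryVec (XA A) g ∧
      ∃ i j, g i ≠ 0 ∧ g j ≠ 0 ∧ t = |g j / g i|} :=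
    ⟨g, hg, Sum.inr i, Sum.inl js, hgk, hgjs, rfl⟩
  have hkap : kappaSub (XA A) = sSup {t : ℝ | ∃ g : Fin n ⊕ Fin m → ℝ,
      IsElementaryVec (XA A) g ∧ ∃ i j, g i ≠ 0 ∧ g j ≠ 0 ∧ t = |g j / g i|} := by
    rw [kappaSub, if_neg]
    push_neg
    exact ⟨hnbot, hntop⟩
  have hle : t ≤ kappaSub (XA A) := by
    rw [hkap]
    exact le_csSup (Set.Finite.bddAbove (ratioSet_finite (XA A))) htmem
  -- 1 ≤ n * C * t
  have h1 : 1 ≤ (n : ℝ) * C * t := by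
    rw [htdef, abs_div]
    have hpos : 0 < |g (Sum.inr i)| := abs_pos.2 hgk
    rw [← mul_div_assoc, le_div_iff₀ hpos, one_mul]
    exact hbound
  have hnC : 0 ≤ (n : ℝ) * C := mul_nonneg (Nat.cast_nonneg n) (le_of_lt hCpos)
  calc (1 : ℝ) ≤ (n : ℝ) * C * t := h1
    _ ≤ (n : ℝ) * C * kappaSub (XA A) := mul_le_mul_of_nonneg_left hle hnC
    _ = (n : ℝ) * kappaSub (XA A) * C := by ring
end
end

section
/- Let A ∈ ℝ^{m×n}, u ∈ ℝ^n with u ≥ 0, b ∈ ℝ^m, and suppose P_{A,b,u} = {x : Ax = b, 0 ≤ x ≤ u} is nonempty. Then for every x with 0 ≤ x ≤ u there exists x̄ ∈ P_{A,b,u} such that ‖x̄ − x‖_∞ ≤ κ(X_A)·‖Ax − b‖₁ and ‖x̄ − x‖₂ ≤ m·κ(X_A)·‖Ax − b‖₂. -/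
open BigOperators Finset

noncomputable section

open Classical

/-! ### Auxiliary lemmas -/

section Aux

variable {ι : Type*} [Fintype ι]

/-- Sign transitivity. -/
lemma hoffman_sign_trans {a b c : ℝ} (h1 : a * b > 0) (h2 : b * c > 0) : a * c > 0 := by
  have hb : b ≠ 0 := by
    rintro rfl; simp at h1
  have hb2 : 0 < b * b := mul_self_pos.mpr hb
  nlinarith [mul_pos h1 h2]

/-- Every nonzero vector of `W` dominates (conformally) an elementary vector. -/
lemma hoffman_exists_elem_conf {W : Submodule ℝ (ι → ℝ)} {w : ι → ℝ}
    (hw : w ∈ W) (hw0 : w ≠ 0) :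
    ∃ v, IsElementaryVec W v ∧ Conforms w v := by
  classical
  set P : (ι → ℝ) → Prop := fun v => v ∈ W ∧ v ≠ 0 ∧ Conforms w v with hP
  have hPw : P w := ⟨hw, hw0, fun i hi => mul_self_pos.mpr hi⟩
  set Q : Set ℕ := {k | ∃ v, P v ∧ (Finset.univ.filter (fun i => v i ≠ 0)).card = k} with hQdef
  have hQ : Q.Nonempty := ⟨_, w, hPw, rfl⟩
  obtain ⟨v, hv, hvcard⟩ := Nat.sInf_mem hQ
  refine ⟨v, ⟨hv.1, hv.2.1, ?_⟩, hv.2.2⟩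
  rintro h hhW hh0 hsub
  have hsubset : ∀ i, h i ≠ 0 → v i ≠ 0 := fun i hi => hsub.1 hi
  obtain ⟨i₁, hi₁v, hi₁h⟩ : ∃ i, v i ≠ 0 ∧ ¬ h i ≠ 0 := by
    obtain ⟨i, hiv, hih⟩ := Set.exists_of_ssubset hsub
    exact ⟨i, hiv, hih⟩
  have hi₁h' : h i₁ = 0 := not_not.mp hi₁h
  have hhne : ∃ i, h i ≠ 0 := Function.ne_iff.mp hh0
  have hshne : (Finset.univ.filter (fun i => h i ≠ 0)).Nonempty := by
    obtain ⟨i, hi⟩ := hhne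
    exact ⟨i, by simpa using hi⟩
  obtain ⟨i₀, hi₀mem, hmin⟩ :=
    Finset.exists_min_image (Finset.univ.filter (fun i => h i ≠ 0))
      (fun i => |v i / h i|) hshne
  have hi₀ : h i₀ ≠ 0 := by simpa using hi₀mem
  set t : ℝ := v i₀ / h i₀ with ht
  set v' : ι → ℝ := v - t • h with hv'
  have hv'W : v' ∈ W := W.sub_mem hv.1 (W.smul_mem t hhW)
  have hv'i₀ : v' i₀ = 0 := by
    simp only [hv', Pi.sub_apply, Pi.smul_apply, smul_eq_mul, ht]
    field_simp; ring
  have key : ∀ j, v' j ≠ 0 → v j * v' j > 0 := by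
    intro j hj
    by_cases hhj : h j = 0
    · have hvj : v' j = v j := by simp [hv', hhj]
      rw [hvj]; rw [hvj] at hj
      exact mul_self_pos.mpr hj
    · have hvj : v j ≠ 0 := hsubset j hhj
      have hminj := hmin j (by simpa using hhj)
      have h1 : |t| * |h j| ≤ |v j| := by
        have habs2 : |v j / h j| = |v j| / |h j| := abs_div _ _
        rw [habs2, le_div_iff₀ (abs_pos.mpr hhj)] at hminj
        exact hminj
      have h2 : v j * (t * h j) ≤ |v j| * (|t| * |h j|) := by
        calc v j * (t * h j) ≤ |v j * (t * h j)| := le_abs_self _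
          _ = |v j| * (|t| * |h j|) := by rw [abs_mul, abs_mul]
      have h3 : |v j| * (|t| * |h j|) ≤ |v j| * |v j| :=
        mul_le_mul_of_nonneg_left h1 (abs_nonneg _)
      have h4 : |v j| * |v j| = v j * v j := abs_mul_abs_self _
      have h5 : 0 ≤ v j * v' j := by
        have : v' j = v j - t * h j := by
          simp [hv', Pi.sub_apply, Pi.smul_apply, smul_eq_mul]
        rw [this]; nlinarith
      exact lt_of_le_of_ne h5 (Ne.symm (mul_ne_zero hvj hj))
  have hv'0 : v' ≠ 0 := by
    intro h0
    have : v' i₁ = 0 := by rw [h0]; rfl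
    have : v i₁ = 0 := by
      simpa [hv', hi₁h'] using this
    exact hi₁v this
  have hPv' : P v' := by
    refine ⟨hv'W, hv'0, fun j hj => ?_⟩
    have h1 := key j hj
    have hvj : v j ≠ 0 := fun h0 => by simp [h0] at h1
    exact hoffman_sign_trans (hv.2.2 j hvj) h1
  -- strict card decrease
  have hsubF : (Finset.univ.filter (fun i => v' i ≠ 0)) ⊂
      (Finset.univ.filter (fun i => v i ≠ 0)) := by
    rw [Finset.ssubset_iff_of_subset]
    · refine ⟨i₀, ?_, ?_⟩
      · simp only [Finset.mem_filter, Finset.mem_univ, true_and]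
        exact hsubset i₀ hi₀
      · simp only [Finset.mem_filter, Finset.mem_univ, true_and, not_not]
        simpa using hv'i₀
    · intro j hj
      simp only [Finset.mem_filter, Finset.mem_univ, true_and] at hj ⊢
      have h1 := key j hj
      exact fun h0 => by simp [h0] at h1
  have hlt : (Finset.univ.filter (fun i => v' i ≠ 0)).card <
      (Finset.univ.filter (fun i => v i ≠ 0)).card := Finset.card_lt_card hsubF
  have : sInf Q ≤ (Finset.univ.filter (fun i => v' i ≠ 0)).card :=
    Nat.sInf_le ⟨v', hPv', rfl⟩
  omega

/-- Elementary vectors are closed under nonzero scaling. -/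
lemma hoffman_elem_smul {W : Submodule ℝ (ι → ℝ)} {g : ι → ℝ}
    (hg : IsElementaryVec W g) {c : ℝ} (hc : c ≠ 0) : IsElementaryVec W (c • g) := by
  obtain ⟨h1, h2, h3⟩ := hg
  refine ⟨W.smul_mem c h1, smul_ne_zero hc h2, ?_⟩
  intro h hhW hh0 hsub
  apply h3 h hhW hh0
  have : {i | (c • g) i ≠ 0} = {i | g i ≠ 0} := by
    ext i; simp [hc]
  rwa [this] at hsub

/-- Conformal decomposition into elementary vectors. -/
lemma hoffman_conf_decomp {W : Submodule ℝ (ι → ℝ)} :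
    ∀ (N : ℕ) (w : ι → ℝ), w ∈ W → (Finset.univ.filter (fun i => w i ≠ 0)).card ≤ N →
    ∃ (K : ℕ) (h : Fin K → ι → ℝ), (∀ k, IsElementaryVec W (h k)) ∧
      (∀ k, Conforms w (h k)) ∧ ∑ k, h k = w := by
  intro N
  induction N with
  | zero =>
    intro w hw hcard
    have hempty : (Finset.univ.filter (fun i => w i ≠ 0)) = ∅ :=
      Finset.card_eq_zero.mp (Nat.le_zero.mp hcard)
    have hw0 : w = 0 := by
      funext i
      by_contra hi
      have : i ∈ (Finset.univ.filter (fun i => w i ≠ 0)) := by simpa using hi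
      simp [hempty] at this
    exact ⟨0, fun k => 0, fun k => k.elim0, fun k => k.elim0, by simp [hw0]⟩
  | succ N ih =>
    intro w hw hcard
    by_cases hw0 : w = 0
    · exact ⟨0, fun k => 0, fun k => k.elim0, fun k => k.elim0, by simp [hw0]⟩
    obtain ⟨v, hvE, hvconf⟩ := hoffman_exists_elem_conf hw hw0
    have hvne : ∃ i, v i ≠ 0 := Function.ne_iff.mp hvE.2.1
    have hsvne : (Finset.univ.filter (fun i => v i ≠ 0)).Nonempty := by
      obtain ⟨i, hi⟩ := hvne; exact ⟨i, by simpa using hi⟩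
    obtain ⟨i₀, hi₀mem, hmin⟩ :=
      Finset.exists_min_image (Finset.univ.filter (fun i => v i ≠ 0))
        (fun i => w i / v i) hsvne
    have hi₀ : v i₀ ≠ 0 := by simpa using hi₀mem
    have hrat : ∀ i, v i ≠ 0 → 0 < w i / v i := by
      intro i hi
      have h1 := hvconf i hi
      rcases mul_pos_iff.mp h1 with ⟨hwp, hvp⟩ | ⟨hwn, hvn⟩
      · exact div_pos hwp hvp
      · exact div_pos_of_neg_of_neg hwn hvn
    set t : ℝ := w i₀ / v i₀ with htdef
    have ht : 0 < t := hrat i₀ hi₀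
    set w' : ι → ℝ := w - t • v with hw'def
    have hw'W : w' ∈ W := W.sub_mem hw (W.smul_mem t hvE.1)
    have hw'at : ∀ j, w' j = w j - t * v j := by
      intro j; simp [hw'def]
    have hw'i₀ : w' i₀ = 0 := by
      rw [hw'at, htdef]; field_simp; ring
    have hkey : ∀ j, w' j ≠ 0 → w j * w' j > 0 := by
      intro j hj
      by_cases hvj : v j = 0
      · have : w' j = w j := by rw [hw'at, hvj]; ring
        rw [this]; rw [this] at hj
        exact mul_self_pos.mpr hj
      · have h1 : t ≤ w j / v j := hmin j (by simpa using hvj)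
        have h2 : w j * v j > 0 := hvconf j hvj
        have hw'j : w' j = v j * (w j / v j - t) := by
          rw [hw'at]; field_simp
        have hne : w j / v j - t ≠ 0 := by
          intro h0
          rw [hw'j, h0, mul_zero] at hj
          exact hj rfl
        have hpos : 0 < w j / v j - t := lt_of_le_of_ne (by linarith) (Ne.symm hne)
        have : w j * w' j = (w j * v j) * (w j / v j - t) := by rw [hw'j]; ring
        rw [this]
        exact mul_pos h2 hpos
    have hsupp : ∀ j, w' j ≠ 0 → w j ≠ 0 := by
      intro j hj h0
      have := hkey j hj
      simp [h0] at this
    -- cardinality decrease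
    have hwi₀ : w i₀ ≠ 0 := by
      have := hvconf i₀ hi₀
      intro h0; simp [h0] at this
    have hi₀w : i₀ ∈ Finset.univ.filter (fun i => w i ≠ 0) := by simpa using hwi₀
    have hsub : (Finset.univ.filter (fun i => w' i ≠ 0)) ⊆
        (Finset.univ.filter (fun i => w i ≠ 0)).erase i₀ := by
      intro j hj
      simp only [Finset.mem_filter, Finset.mem_univ, true_and] at hj
      rw [Finset.mem_erase]
      refine ⟨?_, by simpa using hsupp j hj⟩
      intro h0; rw [h0] at hj; exact hj hw'i₀
    have hcard' : (Finset.univ.filter (fun i => w' i ≠ 0)).card ≤ N := by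
      have h1 := Finset.card_le_card hsub
      rw [Finset.card_erase_of_mem hi₀w] at h1
      have h2 : 1 ≤ (Finset.univ.filter (fun i => w i ≠ 0)).card :=
        Finset.card_pos.mpr ⟨i₀, hi₀w⟩
      omega
    obtain ⟨K, h, helem, hconf', hsum⟩ := ih w' hw'W hcard'
    refine ⟨K + 1, Fin.cons (t • v) h, ?_, ?_, ?_⟩
    · intro k
      refine Fin.cases ?_ ?_ k
      · exact hoffman_elem_smul hvE (ne_of_gt ht)
      · intro k'; simpa using helem k'
    · intro k
      refine Fin.cases ?_ ?_ k
      · intro j hj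
        simp only [Fin.cons_zero, Pi.smul_apply, smul_eq_mul] at hj ⊢
        have hvj : v j ≠ 0 := fun h0 => hj (by rw [h0]; ring)
        have := hvconf j hvj
        nlinarith
      · intro k' j hj
        simp only [Fin.cons_succ] at hj ⊢
        have h1 := hconf' k' j hj
        have hw'j : w' j ≠ 0 := fun h0 => by simp [h0] at h1
        exact hoffman_sign_trans (hkey j hw'j) h1
    · rw [Fin.sum_cons, hsum]
      funext j
      simp [hw'at]
  
/-- Elementary vectors with the same support have the same ratios. -/
lemma hoffman_elem_ratio_eq {W : Submodule ℝ (ι → ℝ)} {g g' : ι → ℝ}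
    (hg : IsElementaryVec W g) (hg' : IsElementaryVec W g')
    (hsupp : {i | g i ≠ 0} = {i | g' i ≠ 0}) {i j : ι} (hi : g i ≠ 0) (hj : g j ≠ 0) :
    g j / g i = g' j / g' i := by
  have hi' : g' i ≠ 0 := by
    have : i ∈ {i | g' i ≠ 0} := hsupp ▸ hi
    exact this
  have hj' : g' j ≠ 0 := by
    have : j ∈ {i | g' i ≠ 0} := hsupp ▸ hj
    exact this
  set c : ℝ := g i / g' i with hc
  have hc0 : c ≠ 0 := div_ne_zero hi hi'
  have hdiff : g - c • g' = 0 := by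
    by_contra hne
    apply hg.2.2 (g - c • g') (W.sub_mem hg.1 (W.smul_mem c hg'.1)) hne
    rw [Set.ssubset_iff_of_subset]
    · refine ⟨i, hi, ?_⟩
      simp only [Set.mem_setOf_eq, Pi.sub_apply, Pi.smul_apply, smul_eq_mul, not_not, hc]
      field_simp; ring
    · intro x hx
      simp only [Set.mem_setOf_eq, Pi.sub_apply, Pi.smul_apply, smul_eq_mul] at hx
      simp only [Set.mem_setOf_eq]
      intro h0
      have hx' : g' x = 0 := by
        by_contra h0'
        have : x ∈ {i | g i ≠ 0} := hsupp ▸ (h0' : x ∈ {i | g' i ≠ 0})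
        exact this h0
      rw [h0, hx'] at hx
      simp at hx
  have hg_eq : ∀ x, g x = c * g' x := by
    intro x
    have := congrFun hdiff x
    simpa [sub_eq_zero] using this
  rw [hg_eq j, hg_eq i, mul_div_mul_left _ _ hc0]

/-- The set whose supremum defines `kappaSub` is bounded above. -/
lemma hoffman_kappa_bddAbove (W : Submodule ℝ (ι → ℝ)) :
    BddAbove {t : ℝ | ∃ g : ι → ℝ, IsElementaryVec W g ∧
      ∃ i j : ι, g i ≠ 0 ∧ g j ≠ 0 ∧ t = |g j / g i|} := by
  classical
  set f : Finset ι × ι × ι → ℝ := fun p =>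
    if h : ∃ g : ι → ℝ, IsElementaryVec W g ∧ {i | g i ≠ 0} = ↑p.1 ∧
        g p.2.1 ≠ 0 ∧ g p.2.2 ≠ 0
    then |h.choose p.2.2 / h.choose p.2.1| else 0 with hf
  have hsub : {t : ℝ | ∃ g : ι → ℝ, IsElementaryVec W g ∧
      ∃ i j : ι, g i ≠ 0 ∧ g j ≠ 0 ∧ t = |g j / g i|} ⊆ Set.range f := by
    rintro t ⟨g, hg, i, j, hi, hj, rfl⟩
    refine ⟨(Finset.univ.filter (fun i => g i ≠ 0), i, j), ?_⟩
    have hcond : ∃ g' : ι → ℝ, IsElementaryVec W g' ∧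
        {i | g' i ≠ 0} = ↑(Finset.univ.filter (fun i => g i ≠ 0)) ∧
        g' i ≠ 0 ∧ g' j ≠ 0 := by
      refine ⟨g, hg, ?_, hi, hj⟩
      ext x; simp
    simp only [hf, dif_pos hcond]
    obtain ⟨h1, h2, h3, h4⟩ := hcond.choose_spec
    have hseq : {x | hcond.choose x ≠ 0} = {x | g x ≠ 0} := by
      rw [h2]; ext x; simp
    rw [hoffman_elem_ratio_eq h1 hg hseq h3 h4]
  exact (Set.finite_range f).bddAbove.mono hsub

lemma hoffman_abs_ratio_le_kappa {W : Submodule ℝ (ι → ℝ)} {g : ι → ℝ}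
    (hg : IsElementaryVec W g) {i j : ι} (hi : g i ≠ 0) (hj : g j ≠ 0) :
    |g j / g i| ≤ kappaSub W := by
  unfold kappaSub
  split_ifs with h
  · rcases h with h | h
    · exfalso
      have : g = 0 := by
        have := hg.1
        rw [h, Submodule.mem_bot] at this
        exact this
      exact hg.2.1 this
    · rcases eq_or_ne i j with rfl | hij
      · rw [div_self hi, abs_one]
      · exfalso
        set g' : ι → ℝ := fun t => if t = i then g i else 0 with hg'
        have hg'i : g' i = g i := by simp [hg']
        have hg'j : g' j = 0 := by simp [hg', (Ne.symm hij)]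
        apply hg.2.2 g' (by rw [h]; trivial)
        · intro h0
          apply hi
          rw [← hg'i, h0]; rfl
        · rw [Set.ssubset_iff_of_subset]
          · exact ⟨j, hj, by simp [hg'j]⟩
          · intro x hx
            simp only [Set.mem_setOf_eq, hg'] at hx
            by_cases hxi : x = i
            · subst hxi; exact hi
            · simp [hxi] at hx
  · exact le_csSup (hoffman_kappa_bddAbove W) ⟨g, hg, i, j, hi, hj, rfl⟩

lemma hoffman_kappa_nonneg (W : Submodule ℝ (ι → ℝ)) : 0 ≤ kappaSub W := by
  unfold kappaSub
  split_ifs with h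
  · norm_num
  · apply Real.sSup_nonneg
    rintro t ⟨g, _, i, j, _, _, rfl⟩
    exact abs_nonneg _

lemma hoffman_abs_le_kappa_mul {W : Submodule ℝ (ι → ℝ)} {g : ι → ℝ}
    (hg : IsElementaryVec W g) {i j : ι} (hi : g i ≠ 0) :
    |g j| ≤ kappaSub W * |g i| := by
  by_cases hj : g j = 0
  · rw [hj, abs_zero]
    exact mul_nonneg (hoffman_kappa_nonneg W) (abs_nonneg _)
  · have := hoffman_abs_ratio_le_kappa hg hi hj
    rw [abs_div, div_le_iff₀ (abs_pos.mpr hi)] at this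
    exact this

/-- Elementary vectors of the kernel of an `m × ι` matrix have support of size at
most `m + 1`. -/
lemma hoffman_elem_card_le {m : ℕ} {B : Matrix (Fin m) ι ℝ} {g : ι → ℝ}
    (hg : IsElementaryVec (LinearMap.ker B.mulVecLin) g) :
    (Finset.univ.filter (fun i => g i ≠ 0)).card ≤ m + 1 := by
  classical
  by_contra hcard
  push_neg at hcard
  set s := Finset.univ.filter (fun i => g i ≠ 0) with hs
  have hsne : s.Nonempty := Finset.card_pos.mp (by omega)
  obtain ⟨i₀, hi₀⟩ := hsne
  set T := s.erase i₀ with hT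
  have hTcard : m < T.card := by
    rw [hT, Finset.card_erase_of_mem hi₀]; omega
  have hnli : ¬ LinearIndependent ℝ (fun t : T => (fun r => B r t : Fin m → ℝ)) := by
    intro hli
    have h1 := hli.fintype_card_le_finrank
    rw [Module.finrank_pi] at h1
    simp only [Fintype.card_coe, Fintype.card_fin] at h1
    omega
  obtain ⟨c, hc0, t₀, ht₀⟩ := Fintype.not_linearIndependent_iff.mp hnli
  set h : ι → ℝ := fun i => if hi : i ∈ T then c ⟨i, hi⟩ else 0 with hh
  have hker : h ∈ LinearMap.ker B.mulVecLin := by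
    rw [LinearMap.mem_ker, Matrix.mulVecLin_apply]
    funext r
    have h2 := congrFun hc0 r
    simp only [Finset.sum_apply, Pi.smul_apply, smul_eq_mul, Pi.zero_apply] at h2
    have : B.mulVec h r = ∑ i ∈ T, B r i * h i := by
      rw [Matrix.mulVec, dotProduct]
      rw [← Finset.sum_subset (Finset.subset_univ T)]
      intro i _ hi
      simp [hh, hi]
    rw [this, Pi.zero_apply, ← h2, ← Finset.sum_coe_sort T]
    apply Finset.sum_congr rfl
    intro t _
    simp [hh, t.2, mul_comm]
  have hne : h ≠ 0 := by
    intro h0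
    apply ht₀
    have := congrFun h0 t₀
    simpa [hh, t₀.2] using this
  apply hg.2.2 h hker hne
  rw [Set.ssubset_iff_of_subset]
  · refine ⟨i₀, ?_, ?_⟩
    · simpa [hs] using hi₀
    · simp only [Set.mem_setOf_eq, not_not, hh]
      have : i₀ ∉ T := Finset.notMem_erase i₀ s
      simp [this]
  · intro x hx
    simp only [Set.mem_setOf_eq, hh] at hx
    by_cases hxT : x ∈ T
    · have : x ∈ s := Finset.mem_of_mem_erase hxT
      simpa [hs] using this
    · simp [hxT] at hx

/-- Sandwich lemma: if `|D| ≤ |a|` and `0 ≤ a * D`, then `D` lies between `0` and `a`. -/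
lemma hoffman_sandwich {a D : ℝ} (h1 : |D| ≤ |a|) (h2 : 0 ≤ a * D) :
    min 0 a ≤ D ∧ D ≤ max 0 a := by
  rcases lt_trichotomy a 0 with h | h | h
  · rw [abs_of_neg h] at h1
    have h3 := abs_le.mp h1
    have hD : D ≤ 0 := by
      by_contra hD
      push_neg at hD
      exact absurd h2 (not_le.mpr (mul_neg_of_neg_of_pos h hD))
    constructor
    · rw [min_eq_right h.le]; linarith [h3.1]
    · rw [max_eq_left h.le]; exact hD
  · subst h
    simp only [abs_zero] at h1
    have : D = 0 := abs_nonpos_iff.mp h1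
    simp [this]
  · rw [abs_of_pos h] at h1
    have h3 := abs_le.mp h1
    have hD : 0 ≤ D := by
      by_contra hD
      push_neg at hD
      exact absurd h2 (not_le.mpr (mul_neg_of_pos_of_neg h hD))
    constructor
    · rw [min_eq_left h.le]; exact hD
    · rw [max_eq_right h.le]; exact h3.2

end Aux

/-- Hoffman-type proximity in terms of the circuit imbalance measure:
if `P_{A,b,u} = {x : Ax = b, 0 ≤ x ≤ u}` is nonempty, then for every `x ∈ [0,u]`
there is `x̄ ∈ P_{A,b,u}` with `‖x̄ − x‖_∞ ≤ κ(X_A)·‖Ax − b‖₁` and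
`‖x̄ − x‖₂ ≤ m·κ(X_A)·‖Ax − b‖₂`. -/
theorem hoffman_proximity_kappa {m n : ℕ} (A : Matrix (Fin m) (Fin n) ℝ)
    (u : Fin n → ℝ) (hu : 0 ≤ u) (b : Fin m → ℝ)
    (hne : ∃ x : Fin n → ℝ, A.mulVec x = b ∧ 0 ≤ x ∧ x ≤ u)
    (x : Fin n → ℝ) (hx0 : 0 ≤ x) (hxu : x ≤ u) :
    ∃ xb : Fin n → ℝ, (A.mulVec xb = b ∧ 0 ≤ xb ∧ xb ≤ u) ∧
      (⨆ i, |xb i - x i|) ≤ kappaSub (XA A) * ∑ j, |A.mulVec x j - b j| ∧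
      Real.sqrt (∑ i, (xb i - x i) ^ 2) ≤
        m * kappaSub (XA A) * Real.sqrt (∑ j, (A.mulVec x j - b j) ^ 2) := by
  classical
  obtain ⟨xs, hxs, hxs0, hxsu⟩ := hne
  set κ := kappaSub (XA A) with hκdef
  have hκ0 : 0 ≤ κ := hoffman_kappa_nonneg _
  set r : Fin m → ℝ := fun j => A.mulVec x j - b j with hrdef
  set w : Fin n ⊕ Fin m → ℝ :=
    Sum.elim (fun i => xs i - x i) (fun j => b j - A.mulVec x j) with hwdef
  have hw1 : ∀ i, w (Sum.inl i) = xs i - x i := fun i => rfl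
  have hw2 : ∀ j, w (Sum.inr j) = b j - A.mulVec x j := fun j => rfl
  have hwW : w ∈ XA A := by
    rw [XA, LinearMap.mem_ker, Matrix.mulVecLin_apply]
    rw [hwdef, Matrix.fromCols_mulVec_sumElim]
    have h1 : A.mulVec (fun i => xs i - x i) = b - A.mulVec x := by
      have heq : (fun i => xs i - x i) = xs - x := rfl
      rw [heq, Matrix.mulVec_sub, hxs]
    have h2 : (-1 : Matrix (Fin m) (Fin m) ℝ).mulVec (fun j => b j - A.mulVec x j) =
        -(b - A.mulVec x) := by
      rw [Matrix.neg_mulVec]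
      congr 1
      have heq : (fun j => b j - A.mulVec x j) = b - A.mulVec x := rfl
      rw [heq, Matrix.one_mulVec]
    rw [h1, h2]
    simp
  obtain ⟨K, h, helem, hconf, hsum⟩ :=
    hoffman_conf_decomp (Finset.univ.filter (fun i => w i ≠ 0)).card w hwW le_rfl
  have hsum_at : ∀ i', ∑ k, h k i' = w i' := by
    intro i'
    have := congrFun hsum i'
    simpa [Finset.sum_apply] using this
  -- absolute value identity
  have habs : ∀ i', ∑ k, |h k i'| = |w i'| := by
    intro i'
    rcases lt_trichotomy (w i') 0 with hneg | h0 | hpos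
    · have hle : ∀ k, h k i' ≤ 0 := by
        intro k
        by_contra hlt
        push_neg at hlt
        have := hconf k i' (ne_of_gt hlt)
        nlinarith
      calc ∑ k, |h k i'| = ∑ k, -(h k i') :=
            Finset.sum_congr rfl fun k _ => abs_of_nonpos (hle k)
        _ = -∑ k, h k i' := by rw [Finset.sum_neg_distrib]
        _ = -(w i') := by rw [hsum_at]
        _ = |w i'| := (abs_of_neg hneg).symm
    · have hz : ∀ k, h k i' = 0 := by
        intro k
        by_contra hk
        have := hconf k i' hk
        rw [h0] at this
        simp at this
      simp [hz, h0]
    · have hge : ∀ k, 0 ≤ h k i' := by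
        intro k
        by_contra hlt
        push_neg at hlt
        have := hconf k i' (ne_of_lt hlt)
        nlinarith
      calc ∑ k, |h k i'| = ∑ k, h k i' :=
            Finset.sum_congr rfl fun k _ => abs_of_nonneg (hge k)
        _ = w i' := hsum_at i'
        _ = |w i'| := (abs_of_pos hpos).symm
  set S : Finset (Fin K) :=
    Finset.univ.filter (fun k => ∃ j, h k (Sum.inr j) ≠ 0) with hSdef
  set d : Fin n ⊕ Fin m → ℝ := ∑ k ∈ S, h k with hddef
  have hd_at : ∀ i', d i' = ∑ k ∈ S, h k i' := by
    intro i'; rw [hddef, Finset.sum_apply]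
  have hdW : d ∈ XA A := Submodule.sum_mem _ (fun k _ => (helem k).1)
  have hd2 : ∀ j, d (Sum.inr j) = w (Sum.inr j) := by
    intro j
    rw [hd_at, ← hsum_at (Sum.inr j)]
    apply Finset.sum_subset (Finset.subset_univ S)
    intro k _ hk
    simp only [hSdef, Finset.mem_filter, Finset.mem_univ, true_and, not_exists, not_not] at hk
    exact hk j
  set xb : Fin n → ℝ := fun i => x i + d (Sum.inl i) with hxbdef
  have hxbd : ∀ i, xb i - x i = d (Sum.inl i) := by
    intro i; rw [hxbdef]; ring
  -- magnitude and sign facts for d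
  have hdabs : ∀ i', |d i'| ≤ |w i'| := by
    intro i'
    rw [hd_at]
    calc |∑ k ∈ S, h k i'| ≤ ∑ k ∈ S, |h k i'| := Finset.abs_sum_le_sum_abs _ _
      _ ≤ ∑ k, |h k i'| :=
          Finset.sum_le_sum_of_subset_of_nonneg (Finset.subset_univ S)
            (fun k _ _ => abs_nonneg _)
      _ = |w i'| := habs i'
  have hdsign : ∀ i', 0 ≤ w i' * d i' := by
    intro i'
    rw [hd_at, Finset.mul_sum]
    apply Finset.sum_nonneg
    intro k _
    rcases eq_or_ne (h k i') 0 with h0 | h0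
    · simp [h0]
    · exact (hconf k i' h0).le
  -- feasibility
  have hfeas : A.mulVec xb = b := by
    have hxbeq : xb = x + (fun i => d (Sum.inl i)) := rfl
    rw [hxbeq, Matrix.mulVec_add]
    have hdker : (Matrix.fromCols A (-1)).mulVec d = 0 := by
      have := hdW
      rw [XA, LinearMap.mem_ker, Matrix.mulVecLin_apply] at this
      exact this
    have hdelim : d = Sum.elim (fun i => d (Sum.inl i)) (fun j => d (Sum.inr j)) := by
      funext i'; cases i' <;> rfl
    rw [hdelim, Matrix.fromCols_mulVec_sumElim, Matrix.neg_mulVec] at hdker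
    have hone : (1 : Matrix (Fin m) (Fin m) ℝ).mulVec (fun j => d (Sum.inr j)) =
        fun j => d (Sum.inr j) := Matrix.one_mulVec _
    rw [hone] at hdker
    funext j
    have h2 := congrFun hdker j
    simp only [Pi.add_apply, Pi.neg_apply, Pi.zero_apply] at h2
    have h3 := hd2 j
    rw [hw2 j] at h3
    simp only [Pi.add_apply]
    linarith
  have hbounds : (0 : Fin n → ℝ) ≤ xb ∧ xb ≤ u := by
    have key : ∀ i, 0 ≤ xb i ∧ xb i ≤ u i := by
      intro i
      have hsand := hoffman_sandwich (hdabs (Sum.inl i)) (hdsign (Sum.inl i))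
      have ha : w (Sum.inl i) = xs i - x i := hw1 i
      have h1 := hx0 i
      have h2 := hxu i
      have h3 := hxs0 i
      have h4 := hxsu i
      simp only [Pi.zero_apply] at h1 h3
      have hxbi : xb i = x i + d (Sum.inl i) := rfl
      rcases le_total 0 (w (Sum.inl i)) with hcase | hcase
      · rw [min_eq_left hcase, max_eq_right hcase] at hsand
        constructor <;> rw [hxbi] <;> nlinarith [hsand.1, hsand.2]
      · rw [min_eq_right hcase, max_eq_left hcase] at hsand
        constructor <;> rw [hxbi] <;> nlinarith [hsand.1, hsand.2]
    refine ⟨fun i => ?_, fun i => (key i).2⟩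
    simpa using (key i).1
  -- the per-circuit ratio bound
  have hbound : ∀ k ∈ S, ∀ i', |h k i'| ≤ κ * ∑ j, |h k (Sum.inr j)| := by
    intro k hk i'
    obtain ⟨jk, hjk⟩ := (Finset.mem_filter.mp hk).2
    have h1 : |h k i'| ≤ κ * |h k (Sum.inr jk)| :=
      hoffman_abs_le_kappa_mul (helem k) hjk
    have h2 : |h k (Sum.inr jk)| ≤ ∑ j, |h k (Sum.inr j)| :=
      Finset.single_le_sum (f := fun j => |h k (Sum.inr j)|) (fun j _ => abs_nonneg _)
        (Finset.mem_univ jk)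
    calc |h k i'| ≤ κ * |h k (Sum.inr jk)| := h1
      _ ≤ κ * ∑ j, |h k (Sum.inr j)| := mul_le_mul_of_nonneg_left h2 hκ0
  have hrabs : ∀ j, |w (Sum.inr j)| = |r j| := by
    intro j
    rw [hw2, hrdef]
    exact abs_sub_comm _ _
  have hsum2 : ∑ k ∈ S, ∑ j, |h k (Sum.inr j)| ≤ ∑ j, |r j| := by
    rw [Finset.sum_comm]
    apply Finset.sum_le_sum
    intro j _
    calc ∑ k ∈ S, |h k (Sum.inr j)| ≤ ∑ k, |h k (Sum.inr j)| :=
          Finset.sum_le_sum_of_subset_of_nonneg (Finset.subset_univ S)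
            (fun k _ _ => abs_nonneg _)
      _ = |w (Sum.inr j)| := habs _
      _ = |r j| := hrabs j
  have hlinf : ∀ i, |d (Sum.inl i)| ≤ κ * ∑ j, |r j| := by
    intro i
    rw [hd_at]
    calc |∑ k ∈ S, h k (Sum.inl i)| ≤ ∑ k ∈ S, |h k (Sum.inl i)| :=
          Finset.abs_sum_le_sum_abs _ _
      _ ≤ ∑ k ∈ S, (κ * ∑ j, |h k (Sum.inr j)|) :=
          Finset.sum_le_sum (fun k hk => hbound k hk (Sum.inl i))
      _ = κ * ∑ k ∈ S, ∑ j, |h k (Sum.inr j)| := by rw [Finset.mul_sum]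
      _ ≤ κ * ∑ j, |r j| := mul_le_mul_of_nonneg_left hsum2 hκ0
  have goal1 : (⨆ i, |xb i - x i|) ≤ κ * ∑ j, |r j| := by
    apply Real.iSup_le
    · intro i
      rw [hxbd]
      exact hlinf i
    · exact mul_nonneg hκ0 (Finset.sum_nonneg (fun j _ => abs_nonneg _))
  -- support cardinality bound
  have hcard : ∀ k ∈ S,
      (Finset.univ.filter (fun i : Fin n => h k (Sum.inl i) ≠ 0)).card ≤ m := by
    intro k hk
    obtain ⟨jk, hjk⟩ := (Finset.mem_filter.mp hk).2
    have htot : (Finset.univ.filter (fun i' => h k i' ≠ 0)).card ≤ m + 1 := by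
      have := helem k
      rw [hκdef] at *
      exact hoffman_elem_card_le (B := Matrix.fromCols A (-1)) (helem k)
    set F := Finset.univ.filter (fun i : Fin n => h k (Sum.inl i) ≠ 0) with hF
    have h1 : F.card = (F.image Sum.inl).card :=
      (Finset.card_image_of_injective F
        (Sum.inl_injective : Function.Injective (Sum.inl : Fin n → Fin n ⊕ Fin m))).symm
    have hjkmem : Sum.inr jk ∈ Finset.univ.filter (fun i' => h k i' ≠ 0) := by
      simpa using hjk
    have h2 : F.image Sum.inl ⊆
        (Finset.univ.filter (fun i' => h k i' ≠ 0)).erase (Sum.inr jk) := by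
      intro y hy
      obtain ⟨i, hi, rfl⟩ := Finset.mem_image.mp hy
      rw [Finset.mem_erase]
      constructor
      · simp
      · simp only [Finset.mem_filter, Finset.mem_univ, true_and]
        simpa [hF] using hi
    have h3 := Finset.card_le_card h2
    rw [Finset.card_erase_of_mem hjkmem] at h3
    omega
  -- per-circuit ℓ1 bound on the first block
  have hl1per : ∀ k ∈ S,
      ∑ i, |h k (Sum.inl i)| ≤ (m : ℝ) * (κ * ∑ j, |h k (Sum.inr j)|) := by
    intro k hk
    obtain ⟨jk, hjk⟩ := (Finset.mem_filter.mp hk).2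
    set F := Finset.univ.filter (fun i : Fin n => h k (Sum.inl i) ≠ 0) with hF
    have hMnn : 0 ≤ κ * |h k (Sum.inr jk)| := mul_nonneg hκ0 (abs_nonneg _)
    have hsum_eq : ∑ i, |h k (Sum.inl i)| = ∑ i ∈ F, |h k (Sum.inl i)| := by
      rw [← Finset.sum_subset (Finset.subset_univ F)]
      intro i _ hi
      simp only [hF, Finset.mem_filter, Finset.mem_univ, true_and, not_not] at hi
      simp [hi]
    have hterm : ∀ i ∈ F, |h k (Sum.inl i)| ≤ κ * |h k (Sum.inr jk)| := by
      intro i _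
      exact hoffman_abs_le_kappa_mul (helem k) hjk
    calc ∑ i, |h k (Sum.inl i)| = ∑ i ∈ F, |h k (Sum.inl i)| := hsum_eq
      _ ≤ F.card * (κ * |h k (Sum.inr jk)|) := by
          have := Finset.sum_le_card_nsmul F _ _ hterm
          simpa [nsmul_eq_mul] using this
      _ ≤ (m : ℝ) * (κ * |h k (Sum.inr jk)|) := by
          apply mul_le_mul_of_nonneg_right _ hMnn
          exact_mod_cast hcard k hk
      _ ≤ (m : ℝ) * (κ * ∑ j, |h k (Sum.inr j)|) := by
          apply mul_le_mul_of_nonneg_left _ (Nat.cast_nonneg m)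
          apply mul_le_mul_of_nonneg_left _ hκ0
          exact Finset.single_le_sum (f := fun j => |h k (Sum.inr j)|) (fun j _ => abs_nonneg _)
            (Finset.mem_univ jk)
  -- ℓ1 bound
  have hl1 : ∑ i, |d (Sum.inl i)| ≤ (m : ℝ) * (κ * ∑ j, |r j|) := by
    calc ∑ i, |d (Sum.inl i)| ≤ ∑ i, ∑ k ∈ S, |h k (Sum.inl i)| := by
          apply Finset.sum_le_sum
          intro i _
          rw [hd_at]
          exact Finset.abs_sum_le_sum_abs _ _
      _ = ∑ k ∈ S, ∑ i, |h k (Sum.inl i)| := Finset.sum_comm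
      _ ≤ ∑ k ∈ S, (m : ℝ) * (κ * ∑ j, |h k (Sum.inr j)|) :=
          Finset.sum_le_sum hl1per
      _ = (m : ℝ) * (κ * ∑ k ∈ S, ∑ j, |h k (Sum.inr j)|) := by
          rw [Finset.mul_sum]
          congr 1
          rw [Finset.mul_sum]
      _ ≤ (m : ℝ) * (κ * ∑ j, |r j|) := by
          apply mul_le_mul_of_nonneg_left _ (Nat.cast_nonneg m)
          exact mul_le_mul_of_nonneg_left hsum2 hκ0
  -- ℓ2 bound
  have goal2 : Real.sqrt (∑ i, (xb i - x i) ^ 2) ≤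
      (m : ℝ) * κ * Real.sqrt (∑ j, r j ^ 2) := by
    have h1 : ∑ i, (d (Sum.inl i)) ^ 2 ≤
        (κ * ∑ j, |r j|) * ∑ i, |d (Sum.inl i)| := by
      rw [Finset.mul_sum]
      apply Finset.sum_le_sum
      intro i _
      have heq : (d (Sum.inl i)) ^ 2 = |d (Sum.inl i)| * |d (Sum.inl i)| := by
        rw [abs_mul_abs_self, sq]
      rw [heq]
      exact mul_le_mul_of_nonneg_right (hlinf i) (abs_nonneg _)
    have h2 : (∑ j, |r j|) ^ 2 ≤ (m : ℝ) * ∑ j, r j ^ 2 := by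
      have hcs := Finset.sum_mul_sq_le_sq_mul_sq Finset.univ
        (fun _ : Fin m => (1 : ℝ)) (fun j => |r j|)
      simp only [one_pow, one_mul, Finset.sum_const, Finset.card_univ,
        Fintype.card_fin, nsmul_eq_mul, mul_one, sq_abs] at hcs
      exact hcs
    have hsnn : 0 ≤ κ * ∑ j, |r j| :=
      mul_nonneg hκ0 (Finset.sum_nonneg (fun j _ => abs_nonneg _))
    have h3 : ∑ i, (d (Sum.inl i)) ^ 2 ≤ ((m : ℝ) * κ) ^ 2 * ∑ j, r j ^ 2 := by
      calc ∑ i, (d (Sum.inl i)) ^ 2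
          ≤ (κ * ∑ j, |r j|) * ∑ i, |d (Sum.inl i)| := h1
        _ ≤ (κ * ∑ j, |r j|) * ((m : ℝ) * (κ * ∑ j, |r j|)) :=
            mul_le_mul_of_nonneg_left hl1 hsnn
        _ = (m : ℝ) * κ ^ 2 * (∑ j, |r j|) ^ 2 := by ring
        _ ≤ (m : ℝ) * κ ^ 2 * ((m : ℝ) * ∑ j, r j ^ 2) := by
            apply mul_le_mul_of_nonneg_left h2
            positivity
        _ = ((m : ℝ) * κ) ^ 2 * ∑ j, r j ^ 2 := by ring
    have hrw : ∑ i, (xb i - x i) ^ 2 = ∑ i, (d (Sum.inl i)) ^ 2 := by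
      apply Finset.sum_congr rfl
      intro i _
      rw [hxbd]
    rw [hrw]
    calc Real.sqrt (∑ i, (d (Sum.inl i)) ^ 2)
        ≤ Real.sqrt (((m : ℝ) * κ) ^ 2 * ∑ j, r j ^ 2) := Real.sqrt_le_sqrt h3
      _ = ((m : ℝ) * κ) * Real.sqrt (∑ j, r j ^ 2) := by
          rw [Real.sqrt_mul (sq_nonneg _), Real.sqrt_sq (by positivity : (0:ℝ) ≤ (m : ℝ) * κ)]
  exact ⟨xb, ⟨hfeas, hbounds.1, hbounds.2⟩, goal1, goal2⟩
end
end

section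
/- For any matrix A ∈ ℝ^{m×n}, κ(ker(A^⊤ | I_n)) = κ(X_A), i.e., the circuit imbalance measure of the kernel of the n×(m+n) matrix obtained by placing A^⊤ next to the n×n identity equals the circuit imbalance measure of X_A. -/
open BigOperators Finset

noncomputable section

open Classical

namespace KD
variable {ι : Type*}

def dotp [Fintype ι] (x y : ι → ℝ) : ℝ := ∑ i, x i * y i

def perp [Fintype ι] (W : Submodule ℝ (ι → ℝ)) : Submodule ℝ (ι → ℝ) where
  carrier := {y | ∀ x ∈ W, dotp x y = 0}
  add_mem' := by
    intro a b ha hb x hx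
    simp only [Set.mem_setOf_eq] at ha hb
    have h1 := ha x hx; have h2 := hb x hx
    simp only [dotp, Pi.add_apply, mul_add, Finset.sum_add_distrib] at *
    rw [h1, h2]; ring
  zero_mem' := by intro x hx; simp [dotp]
  smul_mem' := by
    intro c a ha x hx
    simp only [Set.mem_setOf_eq] at ha ⊢
    have h := ha x hx
    have : dotp x (c • a) = c * dotp x a := by
      simp only [dotp, Pi.smul_apply, smul_eq_mul, Finset.mul_sum]
      exact Finset.sum_congr rfl fun i _ => by ring
    rw [this, h, mul_zero]

lemma mem_perp [Fintype ι] {W : Submodule ℝ (ι → ℝ)} {y : ι → ℝ} :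
    y ∈ perp W ↔ ∀ x ∈ W, dotp x y = 0 := Iff.rfl

lemma perp_eq [Fintype ι] (W : Submodule ℝ (ι → ℝ)) :
    perp W = Submodule.map
      ((WithLp.linearEquiv 2 ℝ (ι → ℝ) : EuclideanSpace ℝ ι ≃ₗ[ℝ] (ι → ℝ)) : EuclideanSpace ℝ ι →ₗ[ℝ] (ι → ℝ))
      ((Submodule.comap
        ((WithLp.linearEquiv 2 ℝ (ι → ℝ) : EuclideanSpace ℝ ι ≃ₗ[ℝ] (ι → ℝ)) : EuclideanSpace ℝ ι →ₗ[ℝ] (ι → ℝ)) W)ᗮ) := by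
  ext y
  set e := (WithLp.linearEquiv 2 ℝ (ι → ℝ) : EuclideanSpace ℝ ι ≃ₗ[ℝ] (ι → ℝ))
  rw [Submodule.mem_map_equiv, Submodule.mem_orthogonal, mem_perp]
  constructor
  · intro h u hu
    have := h (e u) hu
    simpa [e, WithLp.coe_linearEquiv, WithLp.coe_symm_linearEquiv, mul_comm, dotp, PiLp.inner_apply, RCLike.inner_apply, conj_trivial] using this
  · intro h x hx
    have := h (e.symm x) (by simpa using hx)
    simpa [e, WithLp.coe_linearEquiv, WithLp.coe_symm_linearEquiv, mul_comm, dotp, PiLp.inner_apply, RCLike.inner_apply, conj_trivial] using this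

lemma perp_perp [Fintype ι] (W : Submodule ℝ (ι → ℝ)) : perp (perp W) = W := by
  set e := (WithLp.linearEquiv 2 ℝ (ι → ℝ) : EuclideanSpace ℝ ι ≃ₗ[ℝ] (ι → ℝ))
  rw [perp_eq, perp_eq]
  set L := ((e : EuclideanSpace ℝ ι ≃ₗ[ℝ] (ι → ℝ)) : EuclideanSpace ℝ ι →ₗ[ℝ] (ι → ℝ)) with hL
  have h1 : Submodule.comap L (Submodule.map L (Submodule.comap L W)ᗮ) = (Submodule.comap L W)ᗮ :=
    Submodule.comap_map_eq_of_injective e.injective _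
  rw [h1, Submodule.orthogonal_orthogonal]
  exact Submodule.map_comap_eq_of_surjective e.surjective W

lemma perp_bot [Fintype ι] : perp (⊥ : Submodule ℝ (ι → ℝ)) = ⊤ := by
  ext y; simp only [Submodule.mem_top, iff_true, mem_perp]
  intro x hx; rw [Submodule.mem_bot] at hx; subst hx; simp [dotp]

lemma perp_top [Fintype ι] : perp (⊤ : Submodule ℝ (ι → ℝ)) = ⊥ := by
  ext y; rw [mem_perp, Submodule.mem_bot]
  constructor
  · intro h
    have := h y Submodule.mem_top
    rw [dotp] at this
    funext i
    have hnn : ∀ k ∈ Finset.univ, 0 ≤ y k * y k := fun k _ => mul_self_nonneg _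
    have := (Finset.sum_eq_zero_iff_of_nonneg hnn).mp this i (Finset.mem_univ i)
    exact mul_self_eq_zero.mp this
  · rintro rfl; intro x _; simp [dotp]

lemma dotp_single_left [Fintype ι] (k : ι) (h : ι → ℝ) : dotp (Pi.single k 1) h = h k := by
  simp [dotp, Pi.single_apply]

lemma dotp_single_right [Fintype ι] (k : ι) (h : ι → ℝ) : dotp h (Pi.single k 1) = h k := by
  simp [dotp, Pi.single_apply]

lemma dotp_eq_pair [Fintype ι] {g h : ι → ℝ} {i j : ι} (hij : i ≠ j)
    (hk : ∀ k, k ≠ i → k ≠ j → g k * h k = 0) :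
    dotp g h = g i * h i + g j * h j := by
  rw [dotp, ← Finset.sum_subset (Finset.subset_univ ({i, j} : Finset ι))
    (fun k _ hk2 => by
      simp only [Finset.mem_insert, Finset.mem_singleton, not_or] at hk2
      exact hk k hk2.1 hk2.2)]
  rw [Finset.sum_pair hij]

lemma exists_minimal_support [Fintype ι] (P : (ι → ℝ) → Prop) (hP : ∃ h, P h) :
    ∃ h, P h ∧ ∀ h', P h' → ¬ ({i | h' i ≠ 0} ⊂ {i | h i ≠ 0}) := by
  classical
  set f : (ι → ℝ) → ℕ := fun h => ({i | h i ≠ 0} : Set ι).ncard with hf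
  have hne : {n : ℕ | ∃ h, P h ∧ f h = n}.Nonempty := ⟨f hP.choose, hP.choose, hP.choose_spec, rfl⟩
  obtain ⟨h, hPh, hfh⟩ := Nat.sInf_mem hne
  refine ⟨h, hPh, fun h' hPh' hss => ?_⟩
  have hlt : f h' < f h := Set.ncard_lt_ncard hss (Set.toFinite _)
  have : f h' ∈ {n : ℕ | ∃ h, P h ∧ f h = n} := ⟨h', hPh', rfl⟩
  have := Nat.sInf_le this
  omega

lemma exists_elementary [Fintype ι] {W : Submodule ℝ (ι → ℝ)} (hW : W ≠ ⊥) :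
    ∃ g, IsElementaryVec W g := by
  obtain ⟨x, hxW, hx0⟩ := Submodule.exists_mem_ne_zero_of_ne_bot hW
  obtain ⟨h, ⟨hhW, hh0⟩, hmin⟩ := exists_minimal_support (fun h => h ∈ W ∧ h ≠ 0) ⟨x, hxW, hx0⟩
  exact ⟨h, hhW, hh0, fun h' h'W h'0 => hmin h' ⟨h'W, h'0⟩⟩

def ratioSet (W : Submodule ℝ (ι → ℝ)) : Set ℝ :=
  {t : ℝ | ∃ g : ι → ℝ, IsElementaryVec W g ∧
    ∃ i j : ι, g i ≠ 0 ∧ g j ≠ 0 ∧ t = |g j / g i|}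

lemma kappaSub_eq (W : Submodule ℝ (ι → ℝ)) :
    kappaSub W = if W = ⊥ ∨ W = ⊤ then 1 else sSup (ratioSet W) := rfl

/-- coordinate subspace supported inside `D` -/
def coord [Fintype ι] (D : Set ι) : Submodule ℝ (ι → ℝ) where
  carrier := {x | ∀ k, k ∉ D → x k = 0}
  add_mem' := fun ha hb k hk => by simp [ha k hk, hb k hk]
  zero_mem' := fun k _ => rfl
  smul_mem' := fun c a ha k hk => by simp [ha k hk]

lemma mem_Z_iff [Fintype ι] {W : Submodule ℝ (ι → ℝ)} {D : Set ι} {h : ι → ℝ} :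
    h ∈ perp (W ⊔ coord D) ↔ h ∈ perp W ∧ ∀ k ∈ D, h k = 0 := by
  constructor
  · intro hZ
    constructor
    · exact fun x hx => hZ x (Submodule.mem_sup_left hx)
    · intro k hk
      have hmem : (Pi.single k 1 : ι → ℝ) ∈ coord D := by
        intro l hl
        exact Pi.single_eq_of_ne (by rintro rfl; exact hl hk) 1
      have := hZ _ (Submodule.mem_sup_right hmem)
      rwa [dotp_single_left] at this
  · rintro ⟨hpW, hD⟩ x hx
    obtain ⟨w, hw, s, hs, rfl⟩ := Submodule.mem_sup.mp hx
    have h1 : dotp (w + s) h = dotp w h + dotp s h := by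
      simp [dotp, Pi.add_apply, add_mul, Finset.sum_add_distrib]
    rw [h1, hpW w hw]
    have : dotp s h = 0 := by
      rw [dotp]
      apply Finset.sum_eq_zero
      intro k _
      by_cases hk : k ∈ D
      · rw [hD k hk, mul_zero]
      · rw [hs k hk, zero_mul]
    rw [this, add_zero]

lemma ratioSet_subset_perp [Fintype ι] {W : Submodule ℝ (ι → ℝ)} (hW : W ≠ ⊤) :
    ratioSet W ⊆ ratioSet (perp W) := by
  rintro t ⟨g, ⟨hgW, hg0, hgel⟩, i, j, hgi, hgj, rfl⟩
  have hperpbot : perp W ≠ ⊥ := by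
    intro hbot
    apply hW
    rw [← perp_perp W, hbot, perp_bot]
  by_cases hij : i = j
  · subst hij
    obtain ⟨h, hel⟩ := exists_elementary hperpbot
    obtain ⟨k, hk⟩ := Function.ne_iff.mp hel.2.1
    refine ⟨h, hel, k, k, hk, hk, ?_⟩
    rw [div_self hgi, div_self hk]
  -- main case : i ≠ j
  set C : Set ι := {k | g k ≠ 0} with hC
  set D : Set ι := C \ {i, j} with hD
  set Z := perp (W ⊔ coord D) with hZdef
  -- Step B : ∃ h ∈ Z, h i ≠ 0
  have hexists : ∃ h, h ∈ Z ∧ h i ≠ 0 := by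
    by_contra hcon
    push_neg at hcon
    have hei : (Pi.single i 1 : ι → ℝ) ∈ perp Z := by
      intro x hx
      rw [dotp_single_right]
      exact hcon x hx
    rw [hZdef, perp_perp] at hei
    obtain ⟨w, hw, s, hs, hws⟩ := Submodule.mem_sup.mp hei
    have hsi : s i = 0 := hs i (by simp [hD])
    have hwi : w i = 1 := by
      have := congrFun hws i
      simp only [Pi.add_apply, Pi.single_eq_same] at this
      linarith [hsi]
    have hw0 : w ≠ 0 := fun h0 => by simp [h0] at hwi
    apply hgel w hw hw0
    constructor
    · intro k hk
      simp only [Set.mem_setOf_eq] at hk ⊢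
      by_cases hki : k = i
      · subst hki; exact hgi
      · have hwk : w k = (Pi.single i 1 : ι → ℝ) k - s k := by
          have := congrFun hws k; simp only [Pi.add_apply] at this; linarith
        rw [Pi.single_eq_of_ne hki] at hwk
        by_cases hkD : k ∈ D
        · exact hkD.1
        · exfalso; apply hk; rw [hwk, hs k hkD, zero_sub, neg_zero]
    · intro hsub
      have hjC : j ∈ {k | g k ≠ 0} := hgj
      have := hsub hjC
      simp only [Set.mem_setOf_eq] at this
      apply this
      have hwj : w j = (Pi.single i 1 : ι → ℝ) j - s j := by
        have := congrFun hws j; simp only [Pi.add_apply] at this; linarith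
      rw [Pi.single_eq_of_ne (Ne.symm hij)] at hwj
      have hsj : s j = 0 := hs j (by simp [hD])
      rw [hwj, hsj, zero_sub, neg_zero]
  -- Step C : minimal support h
  obtain ⟨h, ⟨hhZ, hhi⟩, hmin⟩ := exists_minimal_support (fun h => h ∈ Z ∧ h i ≠ 0) hexists
  obtain ⟨hhpW, hhD⟩ := mem_Z_iff.mp hhZ
  -- support of h meets C only in {i, j}
  have hgh : ∀ k, k ≠ i → k ≠ j → g k * h k = 0 := by
    intro k hki hkj
    by_cases hkC : g k = 0
    · rw [hkC, zero_mul]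
    · rw [hhD k ⟨hkC, by simp [hki, hkj]⟩, mul_zero]
  have hdot : g i * h i + g j * h j = 0 := by
    rw [← dotp_eq_pair hij hgh]; exact hhpW g hgW
  have hhj : h j ≠ 0 := by
    intro h0
    rw [h0, mul_zero, add_zero, mul_eq_zero] at hdot
    tauto
  -- Step E : h is elementary in perp W
  have helem : IsElementaryVec (perp W) h := by
    refine ⟨hhpW, fun h0 => hhi (by simp [h0]), ?_⟩
    intro h'' h''pW h''0 hss
    have hsub := hss.1
    have h''D : ∀ k ∈ D, h'' k = 0 := fun k hk => by
      by_contra hne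
      exact (hsub hne) (hhD k hk)
    have h''Z : h'' ∈ Z := mem_Z_iff.mpr ⟨h''pW, h''D⟩
    by_cases h''i : h'' i = 0
    · have hgh'' : ∀ k, k ≠ i → k ≠ j → g k * h'' k = 0 := by
        intro k hki hkj
        by_cases hkC : g k = 0
        · rw [hkC, zero_mul]
        · rw [h''D k ⟨hkC, by simp [hki, hkj]⟩, mul_zero]
      have hdot'' : g i * h'' i + g j * h'' j = 0 := by
        rw [← dotp_eq_pair hij hgh'']; exact h''pW g hgW
      have h''j : h'' j = 0 := by
        rw [h''i, mul_zero, zero_add, mul_eq_zero] at hdot''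
        tauto
      obtain ⟨k, hk⟩ := Function.ne_iff.mp h''0
      set h₂ : ι → ℝ := h - (h k / h'' k) • h'' with hh₂
      have h₂Z : h₂ ∈ Z := Submodule.sub_mem _ hhZ (Submodule.smul_mem _ _ h''Z)
      have h₂i : h₂ i ≠ 0 := by
        simp only [hh₂, Pi.sub_apply, Pi.smul_apply, smul_eq_mul, h''i, mul_zero, sub_zero]
        exact hhi
      have h₂k : h₂ k = 0 := by
        simp only [hh₂, Pi.sub_apply, Pi.smul_apply, smul_eq_mul]
        rw [div_mul_cancel₀ (h k) hk, sub_self]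
      have hss₂ : {l | h₂ l ≠ 0} ⊂ {l | h l ≠ 0} := by
        constructor
        · intro l hl
          simp only [Set.mem_setOf_eq] at hl ⊢
          intro hl0
          apply hl
          have h''l : h'' l = 0 := by
            by_contra hne; exact (hsub hne) hl0
          simp [hh₂, hl0, h''l]
        · intro hsup
          exact (hsup (hsub hk)) h₂k
      exact hmin h₂ ⟨h₂Z, h₂i⟩ hss₂
    · exact hmin h'' ⟨h''Z, h''i⟩ hss
  -- Step F : the ratio
  have habs : |g j / g i| = |h i / h j| := by
    have h1 : g j * h j = -(g i * h i) := by linarith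
    have h2 : |g j| * |h j| = |g i| * |h i| := by
      rw [← abs_mul, ← abs_mul, h1, abs_neg]
    rw [abs_div, abs_div, div_eq_div_iff (abs_ne_zero.mpr hgi) (abs_ne_zero.mpr hhj)]
    rw [h2, mul_comm]
  exact ⟨h, helem, j, i, hhj, hhi, habs⟩

lemma ratioSet_perp [Fintype ι] {W : Submodule ℝ (ι → ℝ)} (hb : W ≠ ⊥) (ht : W ≠ ⊤) :
    ratioSet (perp W) = ratioSet W := by
  have hpt : perp W ≠ ⊤ := by
    intro h
    apply hb
    rw [← perp_perp W, h, perp_top]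
  apply Set.Subset.antisymm
  · have := ratioSet_subset_perp (W := perp W) hpt
    rwa [perp_perp] at this
  · exact ratioSet_subset_perp ht

lemma perp_ne_bot [Fintype ι] {W : Submodule ℝ (ι → ℝ)} (ht : W ≠ ⊤) : perp W ≠ ⊥ := by
  intro h; apply ht; rw [← perp_perp W, h, perp_bot]

lemma perp_ne_top [Fintype ι] {W : Submodule ℝ (ι → ℝ)} (hb : W ≠ ⊥) : perp W ≠ ⊤ := by
  intro h; apply hb; rw [← perp_perp W, h, perp_top]

lemma kappa_perp [Fintype ι] (W : Submodule ℝ (ι → ℝ)) : kappaSub (perp W) = kappaSub W := by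
  by_cases hb : W = ⊥
  · subst hb; rw [perp_bot, kappaSub_eq, kappaSub_eq, if_pos (Or.inr rfl), if_pos (Or.inl rfl)]
  by_cases ht : W = ⊤
  · subst ht; rw [perp_top, kappaSub_eq, kappaSub_eq, if_pos (Or.inl rfl), if_pos (Or.inr rfl)]
  rw [kappaSub_eq, kappaSub_eq, if_neg (not_or.mpr ⟨perp_ne_bot ht, perp_ne_top hb⟩),
    if_neg (not_or.mpr ⟨hb, ht⟩)]
  exact congrArg sSup (ratioSet_perp hb ht)


variable {ι' : Type*}

def reindexE (e : ι ≃ ι') : (ι → ℝ) ≃ₗ[ℝ] (ι' → ℝ) where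
  toFun x := x ∘ e.symm
  invFun y := y ∘ e
  map_add' := fun a b => rfl
  map_smul' := fun c a => rfl
  left_inv := fun x => by funext i; simp
  right_inv := fun y => by funext i; simp

lemma reindexE_apply (e : ι ≃ ι') (x : ι → ℝ) (i' : ι') :
    reindexE e x i' = x (e.symm i') := rfl

lemma supp_reindex (e : ι ≃ ι') (x : ι → ℝ) :
    {i' | reindexE e x i' ≠ 0} = e '' {i | x i ≠ 0} := by
  ext i'
  simp only [Set.mem_setOf_eq, Set.mem_image, reindexE_apply]
  constructor
  · intro h; exact ⟨e.symm i', h, e.apply_symm_apply i'⟩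
  · rintro ⟨i, hi, rfl⟩; simpa using hi

lemma image_ssubset_image (e : ι ≃ ι') {s t : Set ι} : e '' s ⊂ e '' t ↔ s ⊂ t := by
  rw [Set.ssubset_def, Set.ssubset_def, Set.image_subset_image_iff e.injective,
    Set.image_subset_image_iff e.injective]

lemma isElementary_map (e : ι ≃ ι') (W : Submodule ℝ (ι → ℝ)) (g : ι → ℝ) :
    IsElementaryVec (W.map ((reindexE e : (ι → ℝ) ≃ₗ[ℝ] (ι' → ℝ)) :
      (ι → ℝ) →ₗ[ℝ] (ι' → ℝ))) (reindexE e g) ↔ IsElementaryVec W g := by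
  have hmem : ∀ x : ι → ℝ, reindexE e x ∈ W.map ((reindexE e : (ι → ℝ) ≃ₗ[ℝ] (ι' → ℝ)) :
      (ι → ℝ) →ₗ[ℝ] (ι' → ℝ)) ↔ x ∈ W := by
    intro x
    rw [Submodule.mem_map_equiv, LinearEquiv.symm_apply_apply]
  have hzero : ∀ x : ι → ℝ, reindexE e x ≠ 0 ↔ x ≠ 0 := fun x =>
    not_congr (map_eq_zero_iff _ (reindexE e).injective)
  constructor
  · rintro ⟨hmem', hz', hmin'⟩
    refine ⟨(hmem g).mp hmem', (hzero g).mp hz', fun h hhW hh0 hss => ?_⟩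
    apply hmin' (reindexE e h) (Submodule.mem_map_of_mem hhW) ((hzero h).mpr hh0)
    rw [supp_reindex, supp_reindex, image_ssubset_image]
    exact hss
  · rintro ⟨hmemg, hzg, hming⟩
    refine ⟨(hmem g).mpr hmemg, (hzero g).mpr hzg, fun h' hh'W hh'0 hss => ?_⟩
    obtain ⟨h, hhW, rfl⟩ := Submodule.mem_map.mp hh'W
    simp only [LinearEquiv.coe_coe] at hh'0 hss
    apply hming h hhW ((hzero h).mp hh'0)
    rw [supp_reindex, supp_reindex, image_ssubset_image] at hss
    exact hss

lemma ratioSet_map (e : ι ≃ ι') (W : Submodule ℝ (ι → ℝ)) :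
    ratioSet (W.map ((reindexE e : (ι → ℝ) ≃ₗ[ℝ] (ι' → ℝ)) :
      (ι → ℝ) →ₗ[ℝ] (ι' → ℝ))) = ratioSet W := by
  ext t
  constructor
  · rintro ⟨g', hel', i', j', hi', hj', rfl⟩
    obtain ⟨g, hgW, hgg⟩ := Submodule.mem_map.mp hel'.1
    rw [LinearEquiv.coe_coe] at hgg
    subst hgg
    refine ⟨g, (isElementary_map e W g).mp hel', e.symm i', e.symm j', hi', hj', rfl⟩
  · rintro ⟨g, hel, i, j, hi, hj, rfl⟩
    refine ⟨reindexE e g, (isElementary_map e W g).mpr hel, e i, e j, ?_, ?_, ?_⟩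
    · rwa [reindexE_apply, e.symm_apply_apply]
    · rwa [reindexE_apply, e.symm_apply_apply]
    · rw [reindexE_apply, reindexE_apply, e.symm_apply_apply, e.symm_apply_apply]

lemma kappa_map (e : ι ≃ ι') (W : Submodule ℝ (ι → ℝ)) :
    kappaSub (W.map ((reindexE e : (ι → ℝ) ≃ₗ[ℝ] (ι' → ℝ)) :
      (ι → ℝ) →ₗ[ℝ] (ι' → ℝ))) = kappaSub W := by
  set L := ((reindexE e : (ι → ℝ) ≃ₗ[ℝ] (ι' → ℝ)) : (ι → ℝ) →ₗ[ℝ] (ι' → ℝ)) with hLdef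
  have hker : LinearMap.ker L = ⊥ := LinearMap.ker_eq_bot.mpr (reindexE e).injective
  have hbot : W.map L = ⊥ ↔ W = ⊥ := by
    constructor
    · intro h
      have := congrArg (Submodule.comap L) h
      rwa [Submodule.comap_map_eq_of_injective (f := L) (reindexE e).injective,
        Submodule.comap_bot, hker] at this
    · rintro rfl; exact Submodule.map_bot L
  have htop : W.map L = ⊤ ↔ W = ⊤ := by
    constructor
    · intro h
      have := congrArg (Submodule.comap L) h
      rwa [Submodule.comap_map_eq_of_injective (f := L) (reindexE e).injective,
        Submodule.comap_top] at this
    · rintro rfl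
      rw [Submodule.map_top]
      exact LinearMap.range_eq_top.mpr (reindexE e).surjective
  rw [kappaSub_eq, kappaSub_eq]
  by_cases h : W = ⊥ ∨ W = ⊤
  · rw [if_pos h, if_pos (by rcases h with h | h <;> [exact Or.inl (hbot.mpr h); exact Or.inr (htop.mpr h)])]
  · rw [if_neg h, if_neg (by
      rintro (h' | h')
      · exact h (Or.inl (hbot.mp h'))
      · exact h (Or.inr (htop.mp h')))]
    exact congrArg sSup (ratioSet_map e W)

end KD


namespace KD
open Matrix

variable {m n : ℕ}

lemma mem_XA {A : Matrix (Fin m) (Fin n) ℝ} {g : Fin n ⊕ Fin m → ℝ} :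
    g ∈ XA A ↔ A *ᵥ (g ∘ Sum.inl) = g ∘ Sum.inr := by
  have hg : g = Sum.elim (g ∘ Sum.inl) (g ∘ Sum.inr) := by funext s; cases s <;> rfl
  rw [XA, LinearMap.mem_ker, Matrix.mulVecLin_apply]
  constructor
  · intro h
    have h' : A.fromCols (-1) *ᵥ Sum.elim (g ∘ Sum.inl) (g ∘ Sum.inr) = 0 := by
      rw [← hg]; exact h
    rw [Matrix.fromCols_mulVec_sumElim, Matrix.neg_mulVec, Matrix.one_mulVec] at h'
    funext k
    have := congrFun h' k
    simp only [Pi.add_apply, Pi.neg_apply, Pi.zero_apply, Function.comp_apply] at this ⊢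
    linarith
  · intro h
    conv_lhs => rw [hg]
    rw [Matrix.fromCols_mulVec_sumElim, Matrix.neg_mulVec, Matrix.one_mulVec, h]
    funext k
    simp

lemma mem_kerT {A : Matrix (Fin m) (Fin n) ℝ} {z : Fin m ⊕ Fin n → ℝ} :
    z ∈ LinearMap.ker (Matrix.fromCols A.transpose
        (1 : Matrix (Fin n) (Fin n) ℝ)).mulVecLin ↔
      A.transpose *ᵥ (z ∘ Sum.inl) + (z ∘ Sum.inr) = 0 := by
  have hz : z = Sum.elim (z ∘ Sum.inl) (z ∘ Sum.inr) := by funext s; cases s <;> rfl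
  rw [LinearMap.mem_ker, Matrix.mulVecLin_apply]
  constructor
  · intro h
    have h' : A.transpose.fromCols 1 *ᵥ Sum.elim (z ∘ Sum.inl) (z ∘ Sum.inr) = 0 := by
      rw [← hz]; exact h
    rwa [Matrix.fromCols_mulVec_sumElim, Matrix.one_mulVec] at h'
  · intro h
    conv_lhs => rw [hz]
    rwa [Matrix.fromCols_mulVec_sumElim, Matrix.one_mulVec]

lemma map_ker_eq (A : Matrix (Fin m) (Fin n) ℝ) :
    Submodule.map
      ((reindexE (Equiv.sumComm (Fin m) (Fin n)) :
        (Fin m ⊕ Fin n → ℝ) ≃ₗ[ℝ] (Fin n ⊕ Fin m → ℝ)) :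
        (Fin m ⊕ Fin n → ℝ) →ₗ[ℝ] (Fin n ⊕ Fin m → ℝ))
      (LinearMap.ker (Matrix.fromCols A.transpose
        (1 : Matrix (Fin n) (Fin n) ℝ)).mulVecLin)
      = perp (XA A) := by
  ext w
  rw [Submodule.mem_map_equiv, mem_kerT, mem_perp]
  have h1 : ((reindexE (Equiv.sumComm (Fin m) (Fin n))).symm w) ∘ Sum.inl
      = fun k => w (Sum.inr k) := rfl
  have h2 : ((reindexE (Equiv.sumComm (Fin m) (Fin n))).symm w) ∘ Sum.inr
      = fun i => w (Sum.inl i) := rfl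
  rw [h1, h2]
  constructor
  · intro h g hg
    rw [mem_XA] at hg
    have hw : ∀ i : Fin n, (∑ k, A k i * w (Sum.inr k)) + w (Sum.inl i) = 0 := by
      intro i
      have := congrFun h i
      simpa [Matrix.mulVec, dotProduct, Matrix.transpose_apply] using this
    have key : ∀ k, g (Sum.inr k) = ∑ i, A k i * g (Sum.inl i) := by
      intro k
      have := congrFun hg k
      simp only [Matrix.mulVec, dotProduct, Function.comp_apply] at this
      exact this.symm
    rw [dotp, Fintype.sum_sum_type]
    have hswap : ∑ k : Fin m, g (Sum.inr k) * w (Sum.inr k)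
        = ∑ i : Fin n, g (Sum.inl i) * ∑ k : Fin m, A k i * w (Sum.inr k) := by
      calc ∑ k : Fin m, g (Sum.inr k) * w (Sum.inr k)
          = ∑ k : Fin m, ∑ i : Fin n, (A k i * g (Sum.inl i)) * w (Sum.inr k) := by
            refine Finset.sum_congr rfl fun k _ => ?_
            rw [key k, Finset.sum_mul]
        _ = ∑ i : Fin n, ∑ k : Fin m, (A k i * g (Sum.inl i)) * w (Sum.inr k) :=
            Finset.sum_comm
        _ = ∑ i : Fin n, g (Sum.inl i) * ∑ k : Fin m, A k i * w (Sum.inr k) := by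
            refine Finset.sum_congr rfl fun i _ => ?_
            rw [Finset.mul_sum]
            exact Finset.sum_congr rfl fun k _ => by ring
    rw [hswap, ← Finset.sum_add_distrib]
    apply Finset.sum_eq_zero
    intro i _
    have h0 : w (Sum.inl i) + ∑ k, A k i * w (Sum.inr k) = 0 := by linarith [hw i]
    rw [← mul_add, h0, mul_zero]
  · intro hp
    funext i
    set x : Fin n → ℝ := Pi.single i 1 with hx
    have hgXA : Sum.elim x (A *ᵥ x) ∈ XA A := mem_XA.mpr rfl
    have hd := hp _ hgXA
    rw [dotp, Fintype.sum_sum_type] at hd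
    simp only [Sum.elim_inl, Sum.elim_inr] at hd
    have e1 : ∑ i' : Fin n, x i' * w (Sum.inl i') = w (Sum.inl i) := by
      simp [hx, Pi.single_apply]
    have e2 : ∀ k, (A *ᵥ x) k = A k i := by
      intro k
      simp [hx, Matrix.mulVec, dotProduct, Pi.single_apply]
    have e3 : ∑ k : Fin m, (A *ᵥ x) k * w (Sum.inr k) = ∑ k : Fin m, A k i * w (Sum.inr k) := by
      exact Finset.sum_congr rfl fun k _ => by rw [e2 k]
    rw [e1, e3] at hd
    have e4 : (A.transpose *ᵥ fun k => w (Sum.inr k)) i = ∑ k, A k i * w (Sum.inr k) := by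
      simp [Matrix.mulVec, dotProduct, Matrix.transpose_apply]
    simp only [Pi.add_apply, Pi.zero_apply]
    rw [e4]
    linarith

end KD

/-- For any matrix `A ∈ ℝ^{m×n}`, the circuit imbalance measure of
`ker(A^⊤ | I_n)` equals that of `X_A = ker(A | −I_m)`. -/
theorem kappa_dual_system {m n : ℕ} (A : Matrix (Fin m) (Fin n) ℝ) :
    kappaSub (LinearMap.ker
        (Matrix.fromCols A.transpose (1 : Matrix (Fin n) (Fin n) ℝ)).mulVecLin) =
      kappaSub (XA A) := by
  have h1 := KD.kappa_map (Equiv.sumComm (Fin m) (Fin n)) (LinearMap.ker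
    (Matrix.fromCols A.transpose (1 : Matrix (Fin n) (Fin n) ℝ)).mulVecLin)
  rw [KD.map_ker_eq] at h1
  rw [← h1]
  exact KD.kappa_perp (XA A)
end
end

section
/- Let A ∈ ℝ^{m×n}, b ∈ ℝ^m, c, u ∈ ℝ^n with u ≥ 0, let σ ≥ 0, π ∈ ℝ^m, and let x ∈ P_{A,b,u} be a feasible solution of LP(A,b,c,u). Then there exists an optimal solution x* of LP(A,b,c,u) such that |x_i − x*_i| ≤ κ(X_A)·θ(x,π,σ) for every i ∈ J(π,σ). -/
open BigOperators Finset

noncomputable section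

open Classical

/-- The optimal value `Φ(A,b,c,u)` of `LP(A,b,c,u)`:
`min ⟨c,x⟩  s.t.  Ax = b, 0 ≤ x ≤ u`. -/
noncomputable def PhiLP {m : ℕ} {ι : Type*} [Fintype ι] (A : Matrix (Fin m) ι ℝ)
    (b : Fin m → ℝ) (c u : ι → ℝ) : ℝ :=
  sInf {v : ℝ | ∃ x : ι → ℝ, A.mulVec x = b ∧ 0 ≤ x ∧ x ≤ u ∧ v = ∑ i, c i * x i}

/-- `θ(x,π,σ) = Σ_{i : c_i − A_i^⊤π > σ} x_i + Σ_{i : c_i − A_i^⊤π < −σ} (u_i − x_i)`. -/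
noncomputable def thetaLP {m n : ℕ} (A : Matrix (Fin m) (Fin n) ℝ) (c u x : Fin n → ℝ)
    (π : Fin m → ℝ) (σ : ℝ) : ℝ :=
  (∑ i ∈ Finset.univ.filter (fun i => c i - ∑ j, A j i * π j > σ), x i) +
    ∑ i ∈ Finset.univ.filter (fun i => c i - ∑ j, A j i * π j < -σ), (u i - x i)

set_option linter.unusedSectionVars false
set_option maxHeartbeats 1600000

section Aux

variable {ι : Type*} [Fintype ι]

noncomputable def suppF (g : ι → ℝ) : Finset ι := Finset.univ.filter (fun i => g i ≠ 0)

lemma mem_suppF {g : ι → ℝ} {i : ι} : i ∈ suppF g ↔ g i ≠ 0 := by simp [suppF]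

lemma suppF_coe (g : ι → ℝ) : (↑(suppF g) : Set ι) = {i | g i ≠ 0} := by ext i; simp [suppF]

lemma ssubset_iff_suppF {h g : ι → ℝ} :
    ({i | h i ≠ 0} ⊂ {i | g i ≠ 0}) ↔ suppF h ⊂ suppF g := by
  rw [← suppF_coe, ← suppF_coe, Finset.coe_ssubset]

lemma sgn_trans {a b c : ℝ} (h1 : a*b>0) (h2 : b*c>0) : a*c>0 := by
  nlinarith [mul_pos h1 h2, sq_nonneg b]

lemma elementary_smul {W : Submodule ℝ (ι → ℝ)} {g : ι → ℝ} (hg : IsElementaryVec W g)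
    {t : ℝ} (ht : t ≠ 0) : IsElementaryVec W (t • g) := by
  obtain ⟨hgW, hg0, hmin⟩ := hg
  refine ⟨W.smul_mem t hgW, ?_, ?_⟩
  · intro h0
    apply hg0
    funext i
    have := congrFun h0 i
    simp only [Pi.smul_apply, smul_eq_mul, Pi.zero_apply] at this ⊢
    exact (mul_eq_zero.1 this).resolve_left ht
  · intro h hW h0 hss
    apply hmin h hW h0
    have : {i | (t • g) i ≠ 0} = {i | g i ≠ 0} := by
      ext i; simp [Pi.smul_apply, smul_eq_mul, mul_ne_zero_iff, ht]
    rwa [this] at hss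

lemma exists_elem_subset (W : Submodule ℝ (ι → ℝ)) :
    ∀ N (w : ι → ℝ), (suppF w).card ≤ N → w ∈ W → w ≠ 0 →
    ∃ g, IsElementaryVec W g ∧ ∀ i, g i ≠ 0 → w i ≠ 0 := by
  intro N
  induction N with
  | zero =>
    intro w hcard hW h0
    exfalso; apply h0; funext i; by_contra hi
    have : i ∈ suppF w := mem_suppF.2 hi
    simp [Finset.card_eq_zero.1 (Nat.le_zero.1 hcard)] at this
  | succ N ih =>
    intro w hcard hW h0
    by_cases hel : IsElementaryVec W w
    · exact ⟨w, hel, fun i hi => hi⟩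
    · simp only [IsElementaryVec, not_and] at hel
      push_neg at hel
      obtain ⟨h, hhW, hh0, hss⟩ := hel hW h0
      rw [ssubset_iff_suppF] at hss
      have hlt : (suppF h).card < (suppF w).card := Finset.card_lt_card hss
      obtain ⟨g, hg, hsub⟩ := ih h (by omega) hhW hh0
      exact ⟨g, hg, fun i hi => mem_suppF.1 (hss.1 (mem_suppF.2 (hsub i hi)))⟩

/-- Key step: given nonzero h with support strictly inside supp w and a mismatch,
produce w' ∈ W, nonzero, strictly smaller support, strongly conformal to w. -/
lemma exists_conformal_elem (W : Submodule ℝ (ι → ℝ)) :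
    ∀ N (w : ι → ℝ), (suppF w).card ≤ N → w ∈ W → w ≠ 0 →
    ∃ g, IsElementaryVec W g ∧ Conforms w g := by
  intro N
  induction N with
  | zero =>
    intro w hcard hW h0
    exfalso; apply h0; funext i; by_contra hi
    have : i ∈ suppF w := mem_suppF.2 hi
    simp [Finset.card_eq_zero.1 (Nat.le_zero.1 hcard)] at this
  | succ N ih =>
    intro w hcard hW h0
    by_cases hel : IsElementaryVec W w
    · exact ⟨w, hel, fun i hi => mul_self_pos.2 hi⟩
    · simp only [IsElementaryVec, not_and] at hel
      push_neg at hel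
      obtain ⟨h0', hh0W, hh00, hss0⟩ := hel hW h0
      rw [ssubset_iff_suppF] at hss0
      -- WLOG there is a mismatch coordinate for h
      have key : ∃ h : ι → ℝ, h ∈ W ∧ h ≠ 0 ∧ suppF h ⊂ suppF w ∧ ∃ i, w i * h i < 0 := by
        by_cases hmis : ∃ i, w i * h0' i < 0
        · exact ⟨h0', hh0W, hh00, hss0, hmis⟩
        · push_neg at hmis
          obtain ⟨i1, hi1⟩ : ∃ i, h0' i ≠ 0 := by
            by_contra hc; push_neg at hc; exact hh00 (funext fun i => hc i)
          have hw1 : w i1 ≠ 0 := mem_suppF.1 (hss0.1 (mem_suppF.2 hi1))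
          have hpos : w i1 * h0' i1 > 0 :=
            lt_of_le_of_ne (hmis i1) (by
              intro hc
              rcases mul_eq_zero.1 hc.symm with h1 | h2
              exacts [hw1 h1, hi1 h2])
          have hs : suppF (-h0') = suppF h0' := by ext i; simp [suppF]
          exact ⟨-h0', W.neg_mem hh0W, by simpa using hh00, by rw [hs]; exact hss0,
            ⟨i1, by simpa using hpos⟩⟩
      obtain ⟨h, hhW, hh0, hss, hmis⟩ := key
      -- minimize -w i / h i over mismatch set
      set M : Finset ι := Finset.univ.filter (fun i => w i * h i < 0) with hM
      have hMne : M.Nonempty := ⟨hmis.choose, by simp [hM, hmis.choose_spec]⟩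
      obtain ⟨i0, hi0M, hi0min⟩ := Finset.exists_min_image M (fun i => -w i / h i) hMne
      have hi0 : w i0 * h i0 < 0 := by simpa [hM] using hi0M
      have hhi0 : h i0 ≠ 0 := by intro hc; rw [hc] at hi0; simp at hi0
      have hwi0 : w i0 ≠ 0 := by intro hc; rw [hc] at hi0; simp at hi0
      set lam : ℝ := -w i0 / h i0 with hlam
      have hlampos : 0 < lam := by
        rw [hlam]
        rcases lt_trichotomy (h i0) 0 with hn | hz | hp
        · have hw : 0 < w i0 := by nlinarith
          exact div_pos_of_neg_of_neg (by linarith) hn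
        · exact absurd hz hhi0
        · have hw : w i0 < 0 := by nlinarith
          exact div_pos (by linarith) hp
      set w' : ι → ℝ := w + lam • h with hw'
      have hw'W : w' ∈ W := W.add_mem hW (W.smul_mem lam hhW)
      have hw'i0 : w' i0 = 0 := by
        simp only [hw', Pi.add_apply, Pi.smul_apply, smul_eq_mul, hlam]
        field_simp
        ring
      -- strong conformality of w' to w
      have hconf : ∀ i, w' i ≠ 0 → w i * w' i > 0 := by
        intro i hne
        by_cases hhi : h i = 0
        · have : w' i = w i := by simp [hw', hhi]
          rw [this] at hne ⊢
          exact mul_self_pos.2 hne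
        · have hwi : w i ≠ 0 := mem_suppF.1 (hss.1 (mem_suppF.2 hhi))
          rcases lt_trichotomy (w i * h i) 0 with hneg | hzero | hpos
          · -- i ∈ M, lam ≤ -w i / h i
            have hiM : i ∈ M := by simp [hM, hneg]
            have hle : lam ≤ -w i / h i := hi0min i hiM
            have hkey : (-w i / h i) * (w i * h i) = -(w i * w i) := by
              field_simp
            have h2 : lam * (w i * h i) ≥ -(w i * w i) := by
              rw [← hkey]
              exact mul_le_mul_of_nonpos_right hle (le_of_lt hneg)
            have h3 : w i * w' i ≥ 0 := by
              simp only [hw', Pi.add_apply, Pi.smul_apply, smul_eq_mul]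
              nlinarith
            rcases eq_or_lt_of_le h3 with he | hl
            · exfalso
              rcases mul_eq_zero.1 he.symm with h1 | h2
              exacts [hwi h1, hne h2]
            · exact hl
          · exact absurd hzero (mul_ne_zero hwi hhi)
          · have : w i * w' i = w i * w i + lam * (w i * h i) := by
              simp only [hw', Pi.add_apply, Pi.smul_apply, smul_eq_mul]; ring
            rw [this]
            have := mul_self_pos.2 hwi
            nlinarith
      have hw'ne : w' ≠ 0 := by
        obtain ⟨j, hjw, hjh⟩ : ∃ j, w j ≠ 0 ∧ h j = 0 := by
          obtain ⟨j, hj1, hj2⟩ := Finset.exists_of_ssubset hss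
          exact ⟨j, mem_suppF.1 hj1, by_contra fun hc => hj2 (mem_suppF.2 hc)⟩
        intro hc
        have : w' j = 0 := by rw [hc]; rfl
        simp only [hw', Pi.add_apply, Pi.smul_apply, smul_eq_mul, hjh, mul_zero, add_zero] at this
        exact hjw this
      have hsscard : (suppF w').card < (suppF w).card := by
        apply Finset.card_lt_card
        constructor
        · intro i hi
          have hne := mem_suppF.1 hi
          have := hconf i hne
          exact mem_suppF.2 (fun hc => by rw [hc] at this; simp at this)
        · intro hsub
          have : i0 ∈ suppF w' := hsub (mem_suppF.2 hwi0)
          exact (mem_suppF.1 this) hw'i0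
      obtain ⟨g, hg, hgconf⟩ := ih w' (by omega) hw'W hw'ne
      refine ⟨g, hg, fun i hgi => ?_⟩
      have h1 := hgconf i hgi
      have hw'ne' : w' i ≠ 0 := fun hc => by rw [hc] at h1; simp at h1
      exact sgn_trans (hconf i hw'ne') h1

lemma conformal_decomposition_aux (W : Submodule ℝ (ι → ℝ)) :
    ∀ N (w : ι → ℝ), (suppF w).card ≤ N → w ∈ W →
    ∃ (k : ℕ) (g : Fin k → ι → ℝ), (∀ l, IsElementaryVec W (g l)) ∧
      (∀ l, Conforms w (g l)) ∧ ∀ i, w i = ∑ l, g l i := by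
  intro N
  induction N with
  | zero =>
    intro w hcard hW
    have hw0 : w = 0 := by
      funext i; by_contra hi
      have : i ∈ suppF w := mem_suppF.2 hi
      simp [Finset.card_eq_zero.1 (Nat.le_zero.1 hcard)] at this
    exact ⟨0, fun l => 0, fun l => l.elim0, fun l => l.elim0, fun i => by simp [hw0]⟩
  | succ N ih =>
    intro w hcard hW
    by_cases h0 : w = 0
    · exact ⟨0, fun l => 0, fun l => l.elim0, fun l => l.elim0, fun i => by simp [h0]⟩
    obtain ⟨g0, hg0el, hg0conf⟩ := exists_conformal_elem W (N+1) w hcard hW h0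
    have hg0ne : g0 ≠ 0 := hg0el.2.1
    have hSne : (suppF g0).Nonempty := by
      obtain ⟨i, hi⟩ : ∃ i, g0 i ≠ 0 := by
        by_contra hc; push_neg at hc; exact hg0ne (funext fun i => hc i)
      exact ⟨i, mem_suppF.2 hi⟩
    obtain ⟨i0, hi0S, hi0min⟩ := Finset.exists_min_image (suppF g0) (fun i => w i / g0 i) hSne
    have hgi0 : g0 i0 ≠ 0 := mem_suppF.1 hi0S
    have hpos0 : w i0 * g0 i0 > 0 := hg0conf i0 hgi0
    set t : ℝ := w i0 / g0 i0 with ht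
    have htpos : 0 < t := by
      rw [ht]
      rcases lt_trichotomy (g0 i0) 0 with hn | hz | hp
      · have hw : w i0 < 0 := by nlinarith
        exact div_pos_of_neg_of_neg hw hn
      · exact absurd hz hgi0
      · have hw : 0 < w i0 := by nlinarith
        exact div_pos hw hp
    set w' : ι → ℝ := w - t • g0 with hw'
    have hw'W : w' ∈ W := W.sub_mem hW (W.smul_mem t hg0el.1)
    have hw'i0 : w' i0 = 0 := by
      simp only [hw', Pi.sub_apply, Pi.smul_apply, smul_eq_mul, ht]
      field_simp
      ring
    have hconf : ∀ i, w' i ≠ 0 → w i * w' i > 0 := by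
      intro i hne
      by_cases hgi : g0 i = 0
      · have : w' i = w i := by simp [hw', hgi]
        rw [this] at hne ⊢
        exact mul_self_pos.2 hne
      · have hprod : w i * g0 i > 0 := hg0conf i hgi
        have hwi : w i ≠ 0 := fun hc => by rw [hc] at hprod; simp at hprod
        have hle : t ≤ w i / g0 i := hi0min i (mem_suppF.2 hgi)
        have hkey : (w i / g0 i) * (w i * g0 i) = w i * w i := by field_simp
        have h2 : t * (w i * g0 i) ≤ w i * w i := by
          rw [← hkey]
          exact mul_le_mul_of_nonneg_right hle (le_of_lt hprod)
        have h3 : w i * w' i ≥ 0 := by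
          simp only [hw', Pi.sub_apply, Pi.smul_apply, smul_eq_mul]
          nlinarith
        rcases eq_or_lt_of_le h3 with he | hl
        · exfalso
          rcases mul_eq_zero.1 he.symm with h1 | h2
          exacts [hwi h1, hne h2]
        · exact hl
    have hsscard : (suppF w').card < (suppF w).card := by
      apply Finset.card_lt_card
      constructor
      · intro i hi
        have hne := mem_suppF.1 hi
        have := hconf i hne
        exact mem_suppF.2 (fun hc => by rw [hc] at this; simp at this)
      · intro hsub
        have hwi0 : w i0 ≠ 0 := fun hc => by rw [hc] at hpos0; simp at hpos0
        have : i0 ∈ suppF w' := hsub (mem_suppF.2 hwi0)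
        exact (mem_suppF.1 this) hw'i0
    obtain ⟨k, g, hgel, hgconf, hgsum⟩ := ih w' (by omega) hw'W
    refine ⟨k+1, Fin.cons (t • g0) g, ?_, ?_, ?_⟩
    · intro l
      refine Fin.cases ?_ ?_ l
      · rw [Fin.cons_zero]
        exact elementary_smul hg0el (ne_of_gt htpos)
      · intro l'; rw [Fin.cons_succ]; exact hgel l'
    · intro l
      refine Fin.cases ?_ ?_ l
      · rw [Fin.cons_zero]
        intro i hi
        simp only [Pi.smul_apply, smul_eq_mul] at hi ⊢
        have hgi : g0 i ≠ 0 := fun hc => hi (by rw [hc]; ring)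
        have := hg0conf i hgi
        nlinarith
      · intro l'
        rw [Fin.cons_succ]
        intro i hi
        have h1 := hgconf l' i hi
        have hw'ne : w' i ≠ 0 := fun hc => by rw [hc] at h1; simp at h1
        exact sgn_trans (hconf i hw'ne) h1
    · intro i
      rw [Fin.sum_univ_succ]
      simp only [Fin.cons_zero, Fin.cons_succ]
      have := hgsum i
      simp only [hw', Pi.sub_apply, Pi.smul_apply, smul_eq_mul] at this
      simp only [Pi.smul_apply, smul_eq_mul]
      linarith



def ratioSet {ι : Type*} (W : Submodule ℝ (ι → ℝ)) : Set ℝ :=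
  {t : ℝ | ∃ g : ι → ℝ, IsElementaryVec W g ∧
    ∃ i j : ι, g i ≠ 0 ∧ g j ≠ 0 ∧ t = |g j / g i|}

/-- two vectors with the same support, one elementary: proportional -/
lemma elem_proportional {W : Submodule ℝ (ι → ℝ)} {g h : ι → ℝ}
    (hg : IsElementaryVec W g) (hhW : h ∈ W) (hh0 : h ≠ 0)
    (hsub : ∀ i, h i ≠ 0 → g i ≠ 0) :
    ∃ a : ℝ, a ≠ 0 ∧ ∀ i, h i = a * g i := by
  obtain ⟨i0, hi0⟩ : ∃ i, h i ≠ 0 := by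
    by_contra hc; push_neg at hc; exact hh0 (funext fun i => hc i)
  have hgi0 : g i0 ≠ 0 := hsub i0 hi0
  set a : ℝ := h i0 / g i0 with ha
  have ha0 : a ≠ 0 := div_ne_zero hi0 hgi0
  set d : ι → ℝ := h - a • g with hd
  have hdW : d ∈ W := W.sub_mem hhW (W.smul_mem a hg.1)
  have hdi0 : d i0 = 0 := by
    simp only [hd, Pi.sub_apply, Pi.smul_apply, smul_eq_mul, ha]
    field_simp
    ring
  by_cases hd0 : d = 0
  · refine ⟨a, ha0, fun i => ?_⟩
    have := congrFun hd0 i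
    simp only [hd, Pi.sub_apply, Pi.smul_apply, smul_eq_mul, Pi.zero_apply] at this
    linarith
  · exfalso
    apply hg.2.2 d hdW hd0
    constructor
    · intro i hi
      simp only [Set.mem_setOf_eq, hd, Pi.sub_apply, Pi.smul_apply, smul_eq_mul] at hi
      by_contra hgi
      simp only [Set.mem_setOf_eq, not_not] at hgi
      apply hi
      have : h i = 0 := by
        by_contra hhi
        exact (hsub i hhi) hgi
      rw [this, hgi]; ring
    · intro hsup
      have : g i0 ≠ 0 := hgi0
      have hmem : i0 ∈ {i | d i ≠ 0} := hsup this
      exact hmem hdi0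

lemma bddAbove_ratioSet (W : Submodule ℝ (ι → ℝ)) : BddAbove (ratioSet W) := by
  classical
  set F : Finset ι × ι × ι → ℝ := fun p =>
    if hE : ∃ g : ι → ℝ, IsElementaryVec W g ∧ suppF g = p.1
    then |hE.choose p.2.2 / hE.choose p.2.1| else 0 with hF
  have hsub : ratioSet W ⊆ Set.range F := by
    rintro t ⟨g, hg, i, j, hi, hj, rfl⟩
    refine ⟨(suppF g, i, j), ?_⟩
    have hE : ∃ g' : ι → ℝ, IsElementaryVec W g' ∧ suppF g' = suppF g := ⟨g, hg, rfl⟩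
    simp only [hF, dif_pos hE]
    obtain ⟨hg'el, hg'supp⟩ := hE.choose_spec
    have hss : ∀ i, g i ≠ 0 → hE.choose i ≠ 0 := by
      intro i hgi
      have : i ∈ suppF hE.choose := by rw [hg'supp]; exact mem_suppF.2 hgi
      exact mem_suppF.1 this
    obtain ⟨a, ha0, hag⟩ := elem_proportional hg'el hg.1 hg.2.1 hss
    have heq : g j / g i = hE.choose j / hE.choose i := by
      rw [hag i, hag j, mul_div_mul_left _ _ ha0]
    rw [heq]
  exact (Set.Finite.subset (Set.finite_range F) hsub).bddAbove

lemma ratio_le_kappa {W : Submodule ℝ (ι → ℝ)} {g : ι → ℝ} (hg : IsElementaryVec W g)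
    {i j : ι} (hi : g i ≠ 0) (hj : g j ≠ 0) : |g j| ≤ kappaSub W * |g i| := by
  have habs : |g i| > 0 := abs_pos.2 hi
  unfold kappaSub
  split_ifs with h
  · rcases h with hbot | htop
    · exfalso
      have := hg.1
      rw [hbot, Submodule.mem_bot] at this
      exact hg.2.1 this
    · -- W = ⊤ : elementary vectors have singleton support
      have hij : j = i := by
        by_contra hne
        set e : ι → ℝ := fun k => if k = i then 1 else 0 with he
        have heW : e ∈ W := by rw [htop]; trivial
        have he0 : e ≠ 0 := by
          intro hc
          have := congrFun hc i
          simp [he] at this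
        apply hg.2.2 e heW he0
        constructor
        · intro k hk
          simp only [Set.mem_setOf_eq, he] at hk
          by_cases hki : k = i
          · subst hki; exact hi
          · simp [hki] at hk
        · intro hsup
          have : j ∈ {k | e k ≠ 0} := hsup hj
          simp [he, hne] at this
      subst hij
      rw [one_mul]
  · push_neg at h
    have hmem : |g j / g i| ∈ {t : ℝ | ∃ g : ι → ℝ, IsElementaryVec W g ∧
        ∃ i j : ι, g i ≠ 0 ∧ g j ≠ 0 ∧ t = |g j / g i|} := ⟨g, hg, i, j, hi, hj, rfl⟩
    have hle : |g j / g i| ≤ sSup _ := le_csSup (bddAbove_ratioSet W) hmem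
    calc |g j| = |g j / g i| * |g i| := by
          rw [abs_div]; field_simp
      _ ≤ _ * |g i| := mul_le_mul_of_nonneg_right hle (le_of_lt habs) |>.trans_eq rfl

lemma one_le_kappa (W : Submodule ℝ (ι → ℝ)) : 1 ≤ kappaSub W := by
  unfold kappaSub
  split_ifs with h
  · exact le_refl 1
  · push_neg at h
    obtain ⟨w, hwW, hw0⟩ := Submodule.exists_mem_ne_zero_of_ne_bot h.1
    obtain ⟨g, hg, -⟩ := exists_elem_subset W (suppF w).card w le_rfl hwW hw0
    obtain ⟨i, hi⟩ : ∃ i, g i ≠ 0 := by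
      by_contra hc; push_neg at hc; exact hg.2.1 (funext fun i => hc i)
    have hmem : (1:ℝ) ∈ {t : ℝ | ∃ g : ι → ℝ, IsElementaryVec W g ∧
        ∃ i j : ι, g i ≠ 0 ∧ g j ≠ 0 ∧ t = |g j / g i|} :=
      ⟨g, hg, i, i, hi, hi, by rw [div_self hi, abs_one]⟩
    exact le_csSup (bddAbove_ratioSet W) hmem

end Aux

lemma exists_optimum {m n : ℕ} (A : Matrix (Fin m) (Fin n) ℝ) (b : Fin m → ℝ)
    (c u : Fin n → ℝ) (x : Fin n → ℝ) (hx : A.mulVec x = b ∧ 0 ≤ x ∧ x ≤ u) :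
    ∃ xs : Fin n → ℝ, (A.mulVec xs = b ∧ 0 ≤ xs ∧ xs ≤ u) ∧
      ∀ y : Fin n → ℝ, A.mulVec y = b → 0 ≤ y → y ≤ u →
        ∑ i, c i * xs i ≤ ∑ i, c i * y i := by
  set K : Set (Fin n → ℝ) := {z | A.mulVec z = b ∧ 0 ≤ z ∧ z ≤ u} with hK
  have hKsub : K ⊆ Set.Icc 0 u := fun z hz => ⟨hz.2.1, hz.2.2⟩
  have hclosed : IsClosed K := by
    have h1 : IsClosed {z : Fin n → ℝ | A.mulVec z = b} := by
      have hcont : Continuous (fun z : Fin n → ℝ => A.mulVec z) :=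
        A.mulVecLin.continuous_of_finiteDimensional
      exact isClosed_eq hcont continuous_const
    have h2 : IsClosed (Set.Icc (0 : Fin n → ℝ) u) := isClosed_Icc
    have : K = {z : Fin n → ℝ | A.mulVec z = b} ∩ Set.Icc 0 u := by
      ext z; simp [hK, Set.mem_Icc, and_assoc]
    rw [this]; exact h1.inter h2
  have hcompact : IsCompact K := (isCompact_Icc).of_isClosed_subset hclosed hKsub
  have hne : K.Nonempty := ⟨x, hx⟩
  have hcont : ContinuousOn (fun z : Fin n → ℝ => ∑ i, c i * z i) K := by
    apply Continuous.continuousOn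
    continuity
  obtain ⟨xs, hxsK, hmin⟩ := hcompact.exists_isMinOn hne hcont
  exact ⟨xs, hxsK, fun y h1 h2 h3 => hmin ⟨h1, h2, h3⟩⟩

/-- For a feasible `x ∈ P_{A,b,u}`, any `π ∈ ℝ^m` and `σ ≥ 0`, there is an
optimal solution `x*` of `LP(A,b,c,u)` with `|x_i − x*_i| ≤ κ(X_A)·θ(x,π,σ)` for every
`i ∈ J(π,σ) = {i : |c_i − A_i^⊤π| > n·⌈κ(X_A)⌉·σ}`. -/
theorem close_optimal_solution {m n : ℕ} (A : Matrix (Fin m) (Fin n) ℝ)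
    (b : Fin m → ℝ) (c u : Fin n → ℝ) (hu : 0 ≤ u)
    (σ : ℝ) (hσ : 0 ≤ σ) (π : Fin m → ℝ)
    (x : Fin n → ℝ) (hx : A.mulVec x = b ∧ 0 ≤ x ∧ x ≤ u) :
    ∃ xs : Fin n → ℝ,
      (A.mulVec xs = b ∧ 0 ≤ xs ∧ xs ≤ u) ∧
      (∀ y : Fin n → ℝ, A.mulVec y = b → 0 ≤ y → y ≤ u →
        ∑ i, c i * xs i ≤ ∑ i, c i * y i) ∧
      ∀ i : Fin n, |c i - ∑ j, A j i * π j| > (n : ℝ) * (⌈kappaSub (XA A)⌉ : ℝ) * σ →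
        |x i - xs i| ≤ kappaSub (XA A) * thetaLP A c u x π σ := by
  obtain ⟨hxb, hx0, hxu⟩ := hx
  obtain ⟨xs, hxsfeas, hopt⟩ := exists_optimum A b c u x ⟨hxb, hx0, hxu⟩
  obtain ⟨hxsb, hxs0, hxsu⟩ := hxsfeas
  refine ⟨xs, ⟨hxsb, hxs0, hxsu⟩, hopt, ?_⟩
  have hx0' : ∀ i, (0:ℝ) ≤ x i := fun i => hx0 i
  have hxs0' : ∀ i, (0:ℝ) ≤ xs i := fun i => hxs0 i
  have hxu' : ∀ i, x i ≤ u i := fun i => hxu i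
  have hxsu' : ∀ i, xs i ≤ u i := fun i => hxsu i
  set κ := kappaSub (XA A) with hκ
  have hκ1 : 1 ≤ κ := one_le_kappa _
  have hκ0 : 0 ≤ κ := by linarith
  set rc : Fin n → ℝ := fun i => c i - ∑ j, A j i * π j with hrc
  set w : Fin n → ℝ := fun i => xs i - x i with hwdef
  -- A w = 0
  have hAw : A.mulVec w = 0 := by
    have : w = xs - x := by funext i; simp [hwdef]
    rw [this, Matrix.mulVec_sub, hxsb, hxb, sub_self]
  -- extended vector in XA
  have hXA : Sum.elim w (0 : Fin m → ℝ) ∈ XA A := by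
    simp only [XA, LinearMap.mem_ker, Matrix.mulVecLin_apply,
      Matrix.fromCols_mulVec_sumElim, hAw, Matrix.mulVec_zero, add_zero]
  obtain ⟨k, G, hGel, hGconf, hGsum⟩ :=
    conformal_decomposition_aux (XA A) (suppF (Sum.elim w (0 : Fin m → ℝ))).card
      (Sum.elim w 0) le_rfl hXA
  set h : Fin k → Fin n → ℝ := fun l i => G l (Sum.inl i) with hh
  have hGzero : ∀ l j, G l (Sum.inr j) = 0 := by
    intro l j
    by_contra hne
    have := hGconf l (Sum.inr j) hne
    simp at this
  have hGsplit : ∀ l, G l = Sum.elim (h l) 0 := by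
    intro l; funext s
    cases s with
    | inl i => simp [hh]
    | inr j => simp [hGzero l j]
  have hAh : ∀ l, A.mulVec (h l) = 0 := by
    intro l
    have hker := (hGel l).1
    simp only [XA, LinearMap.mem_ker, Matrix.mulVecLin_apply] at hker
    rw [hGsplit l] at hker
    simpa [Matrix.fromCols_mulVec_sumElim] using hker
  have hP1 : ∀ l i, h l i ≠ 0 → w i * h l i > 0 := by
    intro l i hi
    have := hGconf l (Sum.inl i) hi
    simpa using this
  have hP2 : ∀ i, w i = ∑ l, h l i := by
    intro i
    have := hGsum (Sum.inl i)
    simpa using this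
  have hSpos : ∀ i, 0 < w i → ∀ l, 0 ≤ h l i := by
    intro i hw l
    by_contra hc; push_neg at hc
    have := hP1 l i (ne_of_lt hc)
    nlinarith
  have hSneg : ∀ i, w i < 0 → ∀ l, h l i ≤ 0 := by
    intro i hw l
    by_contra hc; push_neg at hc
    have := hP1 l i (ne_of_gt hc)
    nlinarith
  have hSzero : ∀ i, w i = 0 → ∀ l, h l i = 0 := by
    intro i hw l
    by_contra hc
    have := hP1 l i hc
    rw [hw] at this; simp at this
  have hP3 : ∀ i, ∑ l, |h l i| = |w i| := by
    intro i
    rcases lt_trichotomy (w i) 0 with hn | hz | hp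
    · have : ∀ l : Fin k, |h l i| = -(h l i) := fun l => abs_of_nonpos (hSneg i hn l)
      rw [Finset.sum_congr rfl (fun l _ => this l), Finset.sum_neg_distrib,
        ← hP2 i, abs_of_neg hn]
    · have : ∀ l : Fin k, h l i = 0 := hSzero i hz
      simp [this, hz]
    · have : ∀ l : Fin k, |h l i| = h l i := fun l => abs_of_nonneg (hSpos i hp l)
      rw [Finset.sum_congr rfl (fun l _ => this l), ← hP2 i, abs_of_pos hp]
  -- bounds: 0 ≤ h l i ≤ w i  or  w i ≤ h l i ≤ 0
  have hbound : ∀ l i, (0 < w i → h l i ≤ w i) ∧ (w i < 0 → w i ≤ h l i) := by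
    intro l i
    constructor
    · intro hw
      rw [hP2 i]
      exact Finset.single_le_sum (fun l' _ => hSpos i hw l') (Finset.mem_univ l)
    · intro hw
      rw [hP2 i]
      have h1 : -(h l i) ≤ ∑ l', -(h l' i) := Finset.single_le_sum
        (f := fun l' => -(h l' i))
        (fun l' _ => neg_nonneg.2 (hSneg i hw l')) (Finset.mem_univ l)
      rw [Finset.sum_neg_distrib] at h1
      linarith
  -- feasibility of xs - h l and optimality stuff
  have hF3 : ∀ l, ∑ i, rc i * h l i ≤ 0 := by
    intro l
    set y : Fin n → ℝ := fun i => xs i - h l i with hy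
    have hyb : A.mulVec y = b := by
      have : y = xs - h l := by funext i; simp [hy]
      rw [this, Matrix.mulVec_sub, hxsb, hAh l, sub_zero]
    have hy0 : 0 ≤ y := by
      intro i
      show (0:ℝ) ≤ xs i - h l i
      rcases lt_trichotomy (w i) 0 with hn | hz | hp
      · have h1 := hSneg i hn l
        linarith [hxs0' i]
      · have h1 := hSzero i hz l
        rw [h1, sub_zero]
        exact hxs0' i
      · have h1 := (hbound l i).1 hp
        have hwi : w i = xs i - x i := rfl
        linarith [hx0' i]
    have hyu : y ≤ u := by
      intro i
      show xs i - h l i ≤ u i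
      rcases lt_trichotomy (w i) 0 with hn | hz | hp
      · have h1 := (hbound l i).2 hn
        have hwi : w i = xs i - x i := rfl
        linarith [hxu' i]
      · have h1 := hSzero i hz l
        rw [h1, sub_zero]
        exact hxsu' i
      · have h1 : 0 ≤ h l i := hSpos i hp l
        linarith [hxsu' i]
    have hle := hopt y hyb hy0 hyu
    have hch : ∑ i, c i * h l i ≤ 0 := by
      have hexp : ∑ i, c i * y i = ∑ i, c i * xs i - ∑ i, c i * h l i := by
        rw [← Finset.sum_sub_distrib]
        exact Finset.sum_congr rfl (fun i _ => by simp [hy]; ring)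
      rw [hexp] at hle
      linarith
    -- reduced costs
    have hid : ∑ i, (∑ j, A j i * π j) * h l i = 0 := by
      have h1 : ∑ i, (∑ j, A j i * π j) * h l i
          = ∑ j, π j * (∑ i, A j i * h l i) := by
        simp_rw [Finset.sum_mul, Finset.mul_sum]
        rw [Finset.sum_comm]
        exact Finset.sum_congr rfl (fun j _ =>
          Finset.sum_congr rfl (fun i _ => by ring))
      rw [h1]
      have h2 : ∀ j, ∑ i, A j i * h l i = 0 := by
        intro j
        have := congrFun (hAh l) j
        simpa [Matrix.mulVec, dotProduct] using this
      simp [h2]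
    have : ∑ i, rc i * h l i = ∑ i, c i * h l i - ∑ i, (∑ j, A j i * π j) * h l i := by
      rw [← Finset.sum_sub_distrib]
      exact Finset.sum_congr rfl (fun i _ => by simp [hrc]; ring)
    rw [this, hid, sub_zero]
    exact hch
  have hF4 : ∀ l i j, h l i ≠ 0 → h l j ≠ 0 → |h l j| ≤ κ * |h l i| := by
    intro l i j hi hj
    exact ratio_le_kappa (hGel l) (i := Sum.inl i) (j := Sum.inl j) hi hj
  -- main part
  intro i hJi
  have hJ : |rc i| > (n : ℝ) * (⌈κ⌉ : ℝ) * σ := by simpa [hrc] using hJi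
  set K : ℝ := (⌈κ⌉ : ℝ) with hKdef
  have hκK : κ ≤ K := Int.le_ceil κ
  have hK1 : 1 ≤ K := le_trans hκ1 hκK
  have hn1 : (1:ℝ) ≤ n := by exact_mod_cast Fin.pos i
  -- selection of a "charged" coordinate for each piece through i
  have hsel : ∀ l, h l i ≠ 0 → ∃ j, h l j ≠ 0 ∧ rc j * h l j < -σ * |h l j| ∧
      |h l i| ≤ κ * |h l j| := by
    intro l hi
    set t : ℝ := |h l i| with htdef
    have ht : 0 < t := abs_pos.2 hi
    have hsum := hF3 l
    rcases lt_trichotomy (rc i * h l i) 0 with hneg | hzero | hpos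
    · refine ⟨i, hi, ?_, by nlinarith [ht, hκ1]⟩
      have h1 : rc i * h l i = -(|rc i| * t) := by
        rw [htdef, ← abs_mul]
        rw [abs_of_neg hneg]; ring
      have hnK : (1:ℝ) ≤ (n:ℝ) * K := by nlinarith
      have hσ' : σ * t ≤ (n:ℝ) * K * σ * t := by
        have a1 := mul_le_mul_of_nonneg_right hnK hσ
        have a2 := mul_le_mul_of_nonneg_right a1 ht.le
        nlinarith [a2]
      have hmul := mul_lt_mul_of_pos_right hJ ht
      nlinarith [hmul, hσ', h1]
    · exfalso
      have hrci : rc i ≠ 0 := by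
        intro hc
        rw [hc] at hJ
        simp only [abs_zero] at hJ
        have : 0 ≤ (n:ℝ) * K * σ :=
          mul_nonneg (mul_nonneg (by linarith) (by linarith)) hσ
        linarith
      exact (mul_ne_zero hrci hi) hzero
    · have h1 : rc i * h l i = |rc i| * t := by
        rw [htdef, ← abs_mul, abs_of_pos hpos]
      have h2 : ∑ j ∈ Finset.univ.erase i, rc j * h l j < -((n:ℝ) * K * σ * t) := by
        have h3 : rc i * h l i + ∑ j ∈ Finset.univ.erase i, rc j * h l j
            = ∑ j, rc j * h l j :=
          Finset.add_sum_erase Finset.univ (fun j => rc j * h l j) (Finset.mem_univ i)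
        have h4 : rc i * h l i > (n:ℝ) * K * σ * t := by nlinarith
        linarith
      have h6 : ∃ j ∈ Finset.univ.erase i, rc j * h l j < -(K * σ * t) := by
        by_contra hc
        push_neg at hc
        have h7 : ∑ j ∈ Finset.univ.erase i, (-(K * σ * t)) ≤
            ∑ j ∈ Finset.univ.erase i, rc j * h l j := Finset.sum_le_sum (fun j hj => hc j hj)
        rw [Finset.sum_const, nsmul_eq_mul] at h7
        have hcard : ((Finset.univ.erase i).card : ℝ) ≤ (n : ℝ) := by
          have := Finset.card_erase_le (a := i) (s := (Finset.univ : Finset (Fin n)))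
          have h8 : (Finset.univ : Finset (Fin n)).card = n := Finset.card_univ.trans (Fintype.card_fin n)
          exact_mod_cast le_trans this (le_of_eq h8)
        have hKst : 0 ≤ K * σ * t :=
          mul_nonneg (mul_nonneg (by linarith) hσ) (le_of_lt ht)
        nlinarith
      obtain ⟨j, hjmem, hjlt⟩ := h6
      have hKst : 0 ≤ K * σ * t := by
        apply mul_nonneg (mul_nonneg (by linarith) hσ) (le_of_lt ht)
      have hhj : h l j ≠ 0 := by
        intro hc
        rw [hc, mul_zero] at hjlt
        linarith
      have hb1 : |h l j| ≤ κ * t := hF4 l i j hi hhj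
      have hb2 : t ≤ κ * |h l j| := hF4 l j i hhj hi
      refine ⟨j, hhj, ?_, hb2⟩
      have hmm : σ * |h l j| ≤ K * σ * t := by
        nlinarith [mul_le_mul_of_nonneg_left hb1 hσ,
          mul_le_mul_of_nonneg_right hκK (mul_nonneg hσ (le_of_lt ht))]
      linarith [hjlt, hmm]
  -- choose charged coordinates
  have hsel' : ∀ l : Fin k, ∃ j : Fin n, h l i ≠ 0 → (h l j ≠ 0 ∧
      rc j * h l j < -σ * |h l j| ∧ |h l i| ≤ κ * |h l j|) := by
    intro l
    by_cases hl : h l i ≠ 0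
    · obtain ⟨j, hj⟩ := hsel l hl
      exact ⟨j, fun _ => hj⟩
    · exact ⟨i, fun hc => absurd hc hl⟩
  choose jj hjj using hsel'
  set L : Finset (Fin k) := Finset.univ.filter (fun l => h l i ≠ 0) with hL
  -- theta bar
  set θbar : Fin n → ℝ := fun j' => if σ < rc j' then x j'
    else if rc j' < -σ then u j' - x j' else 0 with hθbar
  have hfib : ∀ j' : Fin n, ∑ l ∈ L.filter (fun l => jj l = j'), |h l (jj l)| ≤ θbar j' := by
    intro j'
    have hcong : ∑ l ∈ L.filter (fun l => jj l = j'), |h l (jj l)|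
        = ∑ l ∈ L.filter (fun l => jj l = j'), |h l j'| := by
      apply Finset.sum_congr rfl
      intro l hl
      rw [(Finset.mem_filter.1 hl).2]
    rw [hcong]
    by_cases hne : (L.filter (fun l => jj l = j')).Nonempty
    · obtain ⟨l0, hl0⟩ := hne
      obtain ⟨hl0L, hl0j⟩ := Finset.mem_filter.1 hl0
      have hl0i : h l0 i ≠ 0 := (Finset.mem_filter.1 hl0L).2
      obtain ⟨hq1, hq2, hq3⟩ := hjj l0 hl0i
      rw [hl0j] at hq1 hq2
      have hrcj : rc j' ≠ 0 := by
        intro hc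
        rw [hc, zero_mul] at hq2
        nlinarith [abs_nonneg (h l0 j'), abs_pos.2 hq1]
      rcases lt_or_gt_of_ne hrcj with hrcneg | hrcpos
      · -- rc j' < 0 : pieces positive at j', w j' > 0
        have hhpos : 0 < h l0 j' := by
          rcases lt_trichotomy (h l0 j') 0 with hn | hz | hp
          · exfalso; nlinarith [abs_of_neg hn]
          · exact absurd hz hq1
          · exact hp
        have hwpos : 0 < w j' := by
          have := hP1 l0 j' hq1
          nlinarith
        have hrcσ : rc j' < -σ := by
          have habs : |h l0 j'| = h l0 j' := abs_of_pos hhpos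
          rw [habs] at hq2
          nlinarith
        have hsum : ∑ l ∈ L.filter (fun l => jj l = j'), |h l j'| ≤ ∑ l, |h l j'| := by
          apply Finset.sum_le_sum_of_subset_of_nonneg
          · intro l hl; exact Finset.mem_univ l
          · intro l _ _; exact abs_nonneg _
        have : ∑ l, |h l j'| = |w j'| := hP3 j'
        have hwval : |w j'| = xs j' - x j' := by
          rw [abs_of_pos hwpos]
        have hθ : θbar j' = u j' - x j' := by
          simp only [hθbar]
          rw [if_neg (by linarith), if_pos hrcσ]
        rw [hθ]
        linarith [hxsu' j']
      · -- rc j' > 0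
        have hhneg : h l0 j' < 0 := by
          rcases lt_trichotomy (h l0 j') 0 with hn | hz | hp
          · exact hn
          · exact absurd hz hq1
          · exfalso; nlinarith [abs_of_pos hp]
        have hwneg : w j' < 0 := by
          have := hP1 l0 j' hq1
          nlinarith
        have hrcσ : σ < rc j' := by
          have habs : |h l0 j'| = -(h l0 j') := abs_of_neg hhneg
          rw [habs] at hq2
          nlinarith
        have hsum : ∑ l ∈ L.filter (fun l => jj l = j'), |h l j'| ≤ ∑ l, |h l j'| := by
          apply Finset.sum_le_sum_of_subset_of_nonneg
          · intro l hl; exact Finset.mem_univ l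
          · intro l _ _; exact abs_nonneg _
        have : ∑ l, |h l j'| = |w j'| := hP3 j'
        have hwval : |w j'| = x j' - xs j' := by
          rw [abs_of_neg hwneg]; simp [hwdef]
        have hθ : θbar j' = x j' := by
          simp only [hθbar]
          rw [if_pos hrcσ]
        rw [hθ]
        linarith [hxs0' j']
    · rw [Finset.not_nonempty_iff_eq_empty.1 hne, Finset.sum_empty]
      simp only [hθbar]
      split_ifs
      · exact hx0 j'
      · linarith [hx0 j', hxu j']
      · exact le_refl 0
  -- sum of theta bar equals theta
  have hθsum : ∑ j', θbar j' = thetaLP A c u x π σ := by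
    have hpt : ∀ j', θbar j' = (if σ < rc j' then x j' else 0)
        + (if rc j' < -σ then u j' - x j' else 0) := by
      intro j'
      simp only [hθbar]
      split_ifs with h1 h2
      · linarith
      · ring
      · ring
      · ring
    rw [Finset.sum_congr rfl (fun j' _ => hpt j'), Finset.sum_add_distrib,
      ← Finset.sum_filter, ← Finset.sum_filter]
    simp only [thetaLP, hrc]
  -- assembling
  have hstep1 : |x i - xs i| = |w i| := by
    rw [abs_sub_comm]
  have hstep2 : |w i| = ∑ l ∈ L, |h l i| := by
    rw [← hP3 i]
    symm
    apply Finset.sum_subset (Finset.filter_subset _ _)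
    intro l _ hl
    simp only [hL, Finset.mem_filter, Finset.mem_univ, true_and, not_not] at hl
    rw [hl, abs_zero]
  have hstep3 : ∑ l ∈ L, |h l i| ≤ κ * ∑ l ∈ L, |h l (jj l)| := by
    rw [Finset.mul_sum]
    apply Finset.sum_le_sum
    intro l hl
    exact (hjj l (Finset.mem_filter.1 hl).2).2.2
  have hstep4 : ∑ l ∈ L, |h l (jj l)| ≤ thetaLP A c u x π σ := by
    rw [← hθsum]
    rw [← Finset.sum_fiberwise_of_maps_to (fun l _ => Finset.mem_univ (jj l))
      (fun l => |h l (jj l)|)]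
    exact Finset.sum_le_sum (fun j' _ => hfib j')
  have hθnn : 0 ≤ ∑ l ∈ L, |h l (jj l)| := Finset.sum_nonneg (fun l _ => abs_nonneg _)
  calc |x i - xs i| = |w i| := hstep1
    _ ≤ κ * ∑ l ∈ L, |h l (jj l)| := by rw [hstep2]; exact hstep3
    _ ≤ κ * thetaLP A c u x π σ := by
        apply mul_le_mul_of_nonneg_left hstep4 hκ0
end
end
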